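/- arXiv:2509.17402 — 4 statements merged into one kernel-verified Lean document; each statement's English description precedes it below -/
import Mathlib

section
/- Let n ≥ 1, let H : ℝⁿ × ℝⁿ → ℝ be a Tonelli Hamiltonian and L(x,v) = sup_{p∈ℝⁿ}(⟨v,p⟩ − H(x,p)) its associated Lagrangian. Let λ, ε ∈ (0,1], let x₀ ∈ ℝⁿ, let u be a classical solution of the viscous discounted equation λu + H(x, Du) = εΔu, and let θ be a weak adjoint density for u at x₀ (with parameters λ, ε). Then ∫_{[0,1)ⁿ} L(x, ∂H/∂p(x, Du(x))) θ(x) dx = λ u(x₀). -/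
open MeasureTheory Real Filter
open scoped RealInnerProductSpace

noncomputable section

/-- Euclidean space ℝⁿ. -/
abbrev Em (n : ℕ) := EuclideanSpace ℝ (Fin n)

/-- The integer vector k ∈ ℤⁿ as an element of ℝⁿ. -/
def intVec {n : ℕ} (k : Fin n → ℤ) : Em n := WithLp.toLp 2 (fun i => (k i : ℝ))

/-- ℤⁿ-periodicity of a real-valued function on ℝⁿ. -/
def ZPeriodic {n : ℕ} (u : Em n → ℝ) : Prop :=
  ∀ (x : Em n) (k : Fin n → ℤ), u (x + intVec k) = u x

/-- ℤⁿ-periodicity of a vector field on ℝⁿ. -/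
def ZPeriodicV {n : ℕ} (b : Em n → Em n) : Prop :=
  ∀ (x : Em n) (k : Fin n → ℤ), b (x + intVec k) = b x

/-- The fundamental domain [0,1)ⁿ of the torus ℝⁿ/ℤⁿ. -/
def cube (n : ℕ) : Set (Em n) := {x | ∀ i, x i ∈ Set.Ico (0:ℝ) 1}

/-- The Laplacian of u, as the trace of the second derivative. -/
def lap {n : ℕ} (u : Em n → ℝ) (x : Em n) : ℝ :=
  ∑ i, iteratedFDeriv ℝ 2 u x ![EuclideanSpace.single i 1, EuclideanSpace.single i 1]

/-- The (i,j) entry of the Hessian matrix of u at x. -/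
def hess {n : ℕ} (u : Em n → ℝ) (x : Em n) (i j : Fin n) : ℝ :=
  iteratedFDeriv ℝ 2 u x ![EuclideanSpace.single i 1, EuclideanSpace.single j 1]

/-- The squared Frobenius norm |D²u(x)|² of the Hessian of u at x. -/
def hessSq {n : ℕ} (u : Em n → ℝ) (x : Em n) : ℝ :=
  ∑ i, ∑ j, (hess u x i j)^2

/-- Divergence of a vector field. -/
def diver {n : ℕ} (V : Em n → Em n) (x : Em n) : ℝ :=
  ∑ i, fderiv ℝ (fun y => V y i) x (EuclideanSpace.single i 1)

/-- Partial gradient ∂H/∂p of H(x,p) in the second variable. -/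
def Hp {n : ℕ} (H : Em n × Em n → ℝ) (x p : Em n) : Em n :=
  gradient (fun q => H (x, q)) p

/-- Partial gradient ∂H/∂x of H(x,p) in the first variable. -/
def Hx {n : ℕ} (H : Em n × Em n → ℝ) (x p : Em n) : Em n :=
  gradient (fun y => H (y, p)) x

/-- A Tonelli Hamiltonian: C², ℤⁿ-periodic in x, positive definite Hessian in p,
uniformly superlinear in p. -/
structure Tonelli {n : ℕ} (H : Em n × Em n → ℝ) : Prop where
  smooth : ContDiff ℝ 2 H
  periodic : ∀ (x p : Em n) (k : Fin n → ℤ), H (x + intVec k, p) = H (x, p)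
  posdef : ∀ (x p v : Em n), v ≠ 0 →
    0 < iteratedFDeriv ℝ 2 (fun q => H (x, q)) p ![v, v]
  superlinear : ∀ A : ℝ, ∃ R : ℝ, ∀ (x p : Em n), R ≤ ‖p‖ → A * ‖p‖ ≤ H (x, p)

/-- A classical (ℤⁿ-periodic, C²) solution of λu + H(x,Du) = εΔu. -/
def ClassicalSol {n : ℕ} (H : Em n × Em n → ℝ) (lam eps : ℝ) (u : Em n → ℝ) : Prop :=
  ContDiff ℝ 2 u ∧ ZPeriodic u ∧
    ∀ x, lam * u x + H (x, gradient u x) = eps * lap u x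

/-- A ℤⁿ-periodic continuous viscosity solution of λu + H(x,Du) = 0. -/
def ViscositySol {n : ℕ} (H : Em n × Em n → ℝ) (lam : ℝ) (u : Em n → ℝ) : Prop :=
  Continuous u ∧ ZPeriodic u ∧
  ∀ φ : Em n → ℝ, ContDiff ℝ 1 φ →
    (∀ x, IsLocalMax (fun y => u y - φ y) x → lam * u x + H (x, gradient φ x) ≤ 0) ∧
    (∀ x, IsLocalMin (fun y => u y - φ y) x → 0 ≤ lam * u x + H (x, gradient φ x))

/-- A weak adjoint density for u at x₀ with parameters λ, ε. -/
def AdjointDensity {n : ℕ} (H : Em n × Em n → ℝ) (lam eps : ℝ) (u : Em n → ℝ)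
    (x₀ : Em n) (θ : Em n → ℝ) : Prop :=
  ZPeriodic θ ∧ (∀ x, 0 ≤ θ x) ∧ IntegrableOn θ (cube n) ∧
  (∫ x in cube n, θ x) = 1 ∧
  ∀ ψ : Em n → ℝ, ContDiff ℝ 2 ψ → ZPeriodic ψ →
    (∫ x in cube n, (⟪gradient ψ x, Hp H x (gradient u x)⟫ - eps * lap ψ x) * θ x)
      = lam * ψ x₀ - lam * ∫ x in cube n, ψ x * θ x

/-- The Lagrangian associated to H by Legendre transform. -/
def Lag {n : ℕ} (H : Em n × Em n → ℝ) (x v : Em n) : ℝ :=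
  ⨆ p : Em n, (⟪v, p⟫ - H (x, p))

lemma grad_ineq {n : ℕ} (g : Em n → ℝ) (hg : ContDiff ℝ 2 g)
    (hpos : ∀ (y w : Em n), 0 ≤ iteratedFDeriv ℝ 2 g y ![w, w]) (p q : Em n) :
    g p + ⟪gradient g p, q - p⟫ ≤ g q := by
  set w := q - p with hw
  set c : ℝ → Em n := fun t => p + t • w with hc
  have hdiff : Differentiable ℝ g := hg.differentiable (by norm_num)
  have hc' : ∀ t : ℝ, HasDerivAt c w t := by
    intro t
    simpa [hc] using ((hasDerivAt_id t).smul_const w).const_add p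
  -- derivative of φ := g ∘ c
  have hφ : ∀ t : ℝ, HasDerivAt (fun s => g (c s)) (fderiv ℝ g (c t) w) t := by
    intro t
    exact (hdiff (c t)).hasFDerivAt.comp_hasDerivAt t (hc' t)
  -- ψ := t ↦ fderiv g (c t) w ; derivative is the second derivative, nonneg
  set ψ : ℝ → ℝ := fun t => fderiv ℝ g (c t) w with hψdef
  have hfd : ContDiff ℝ 1 (fderiv ℝ g) := (hg.fderiv_right (m := 1) (by norm_num))
  have hψ : ∀ t : ℝ, HasDerivAt ψ (iteratedFDeriv ℝ 2 g (c t) ![w, w]) t := by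
    intro t
    have h1 : HasDerivAt (fun s => fderiv ℝ g (c s)) (fderiv ℝ (fderiv ℝ g) (c t) w) t :=
      ((hfd.differentiable one_ne_zero) (c t)).hasFDerivAt.comp_hasDerivAt t (hc' t)
    have h2 := h1.clm_apply (hasDerivAt_const t w)
    simp only [map_zero, add_zero] at h2
    rw [iteratedFDeriv_two_apply]
    simpa using h2
  have hψmono : Monotone ψ :=
    monotone_of_deriv_nonneg (fun t => (hψ t).differentiableAt)
      (fun t => by rw [(hψ t).deriv]; exact hpos _ _)
  obtain ⟨t, ht, hslope⟩ := exists_hasDerivAt_eq_slope (fun s => g (c s)) ψ one_pos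
    (fun s _ => (hφ s).continuousAt.continuousWithinAt) (fun s _ => hφ s)
  have h0 : ψ 0 ≤ ψ t := hψmono ht.1.le
  have hc0 : c 0 = p := by simp [hc]
  have hc1 : c 1 = q := by simp [hc, hw]
  have hgrad : ⟪gradient g p, w⟫ = fderiv ℝ g p w := by
    rw [← InnerProductSpace.toDual_apply_apply, gradient,
      LinearIsometryEquiv.apply_symm_apply]
  rw [hslope, hc1, hc0] at h0
  have : ψ 0 = fderiv ℝ g p w := by simp [hψdef, hc0]
  rw [this] at h0
  rw [hgrad]
  linarith [h0]

lemma legendre_eq {n : ℕ} (H : Em n × Em n → ℝ) (hH : Tonelli H) (x p : Em n) :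
    Lag H x (Hp H x p) = ⟪Hp H x p, p⟫ - H (x, p) := by
  set g : Em n → ℝ := fun q => H (x, q) with hgdef
  have hg : ContDiff ℝ 2 g := hH.smooth.comp (contDiff_prodMk_right x)
  have hnn : ∀ (y w : Em n), 0 ≤ iteratedFDeriv ℝ 2 g y ![w, w] := by
    intro y w
    rcases eq_or_ne w 0 with h | h
    · have h0 : (![w, w] : Fin 2 → Em n) 0 = 0 := by simp [h]
      rw [show iteratedFDeriv ℝ 2 g y ![w, w] = 0 from by
        simpa [h] using (iteratedFDeriv ℝ 2 g y).map_coord_zero 0 h0]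
    · exact (hH.posdef x y w h).le
  have hub : ∀ q : Em n, ⟪Hp H x p, q⟫ - H (x, q) ≤ ⟪Hp H x p, p⟫ - H (x, p) := by
    intro q
    have h1 := grad_ineq g hg hnn p q
    have h2 : ⟪gradient g p, q - p⟫ = ⟪Hp H x p, q⟫ - ⟪Hp H x p, p⟫ := by
      rw [inner_sub_right]; rfl
    rw [h2] at h1
    have hgq : g q = H (x, q) := rfl
    have hgp : g p = H (x, p) := rfl
    rw [hgq, hgp] at h1
    linarith
  have hbdd : BddAbove (Set.range fun q : Em n => ⟪Hp H x p, q⟫ - H (x, q)) :=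
    ⟨⟪Hp H x p, p⟫ - H (x, p), by rintro _ ⟨q, rfl⟩; exact hub q⟩
  unfold Lag
  exact le_antisymm (ciSup_le hub) (le_ciSup hbdd p)

lemma measurableSet_cube (n : ℕ) : MeasurableSet (cube n) := by
  have h : cube n = ⋂ i, (fun x : Em n => x i) ⁻¹' Set.Ico (0:ℝ) 1 := by
    ext x; simp [cube]
  rw [h]
  refine MeasurableSet.iInter fun i => ?_
  exact (EuclideanSpace.proj (𝕜 := ℝ) i).continuous.measurable measurableSet_Ico

lemma cube_subset_ball (n : ℕ) : cube n ⊆ Metric.closedBall 0 (Real.sqrt n) := by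
  intro x hx
  rw [Metric.mem_closedBall, dist_zero_right, EuclideanSpace.norm_eq]
  apply Real.sqrt_le_sqrt
  calc ∑ i, ‖x i‖ ^ 2 ≤ ∑ _i : Fin n, (1:ℝ) := by
        refine Finset.sum_le_sum fun i _ => ?_
        have h0 := (hx i).1; have h1 := (hx i).2
        rw [Real.norm_eq_abs, abs_of_nonneg h0]
        nlinarith
    _ = n := by simp

lemma integrable_mul_density {n : ℕ} {f θ : Em n → ℝ} (hf : Continuous f)
    (hθnn : ∀ x, 0 ≤ θ x) (hθint : IntegrableOn θ (cube n)) :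
    IntegrableOn (fun x => f x * θ x) (cube n) := by
  obtain ⟨C, hC⟩ := (isCompact_closedBall (0 : Em n) (Real.sqrt n)).exists_bound_of_continuousOn
    hf.continuousOn
  refine (hθint.const_mul C).mono' (hf.aestronglyMeasurable.mul hθint.aestronglyMeasurable) ?_
  refine (MeasureTheory.ae_restrict_iff' (measurableSet_cube n)).2 (Filter.Eventually.of_forall
    fun x hx => ?_)
  have hfx : ‖f x‖ ≤ C := hC x (cube_subset_ball n hx)
  have hnrm : ‖f x * θ x‖ = ‖f x‖ * θ x := by
    rw [norm_mul, Real.norm_eq_abs (θ x), abs_of_nonneg (hθnn x)]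
  rw [hnrm]
  exact mul_le_mul_of_nonneg_right hfx (hθnn x)

lemma gradient_continuous {n : ℕ} {u : Em n → ℝ} (hu : ContDiff ℝ 2 u) :
    Continuous (fun x => gradient u x) := by
  have h : Continuous (fun x => fderiv ℝ u x) := hu.continuous_fderiv (by norm_num)
  exact (InnerProductSpace.toDual ℝ (Em n)).symm.continuous.comp h

lemma Hp_eq {n : ℕ} (H : Em n × Em n → ℝ) (hH : Tonelli H) (x p : Em n) :
    Hp H x p = (InnerProductSpace.toDual ℝ (Em n)).symm
      ((fderiv ℝ H (x, p)).comp (ContinuousLinearMap.inr ℝ (Em n) (Em n))) := by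
  have h1 : HasFDerivAt (fun q : Em n => H (x, q))
      ((fderiv ℝ H (x, p)).comp (ContinuousLinearMap.inr ℝ (Em n) (Em n))) p :=
    ((hH.smooth.differentiable (by norm_num)) (x, p)).hasFDerivAt.comp p
      (hasFDerivAt_prodMk_right x p)
  rw [Hp, gradient, h1.fderiv]

lemma Hp_continuous {n : ℕ} (H : Em n × Em n → ℝ) (hH : Tonelli H) {G : Em n → Em n}
    (hG : Continuous G) : Continuous (fun x => Hp H x (G x)) := by
  have h0 : Continuous (fun x : Em n => fderiv ℝ H (x, G x)) :=
    (hH.smooth.continuous_fderiv (by norm_num)).comp (continuous_id.prodMk hG)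
  have h1 : Continuous (fun x : Em n =>
      (fderiv ℝ H (x, G x)).comp (ContinuousLinearMap.inr ℝ (Em n) (Em n))) :=
    h0.clm_comp continuous_const
  have h2 := (InnerProductSpace.toDual ℝ (Em n)).symm.continuous.comp h1
  have heq : (fun x => Hp H x (G x)) = fun x => (InnerProductSpace.toDual ℝ (Em n)).symm
      ((fderiv ℝ H (x, G x)).comp (ContinuousLinearMap.inr ℝ (Em n) (Em n))) := by
    funext x; exact Hp_eq H hH x (G x)
  rw [heq]; exact h2

lemma lap_continuous {n : ℕ} {u : Em n → ℝ} (hu : ContDiff ℝ 2 u) :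
    Continuous (fun x => lap u x) := by
  have hfd : ContDiff ℝ 1 (fderiv ℝ u) := hu.fderiv_right (m := 1) (by norm_num)
  have h2 : Continuous (fun x => fderiv ℝ (fderiv ℝ u) x) := hfd.continuous_fderiv one_ne_zero
  unfold lap
  refine continuous_finset_sum _ fun i _ => ?_
  have heq : (fun x : Em n => iteratedFDeriv ℝ 2 u x
      ![EuclideanSpace.single i 1, EuclideanSpace.single i 1]) =
      fun x => fderiv ℝ (fderiv ℝ u) x (EuclideanSpace.single i 1) (EuclideanSpace.single i 1) := by
    funext x
    rw [iteratedFDeriv_two_apply]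
    simp
  rw [heq]
  exact (h2.clm_apply continuous_const).clm_apply continuous_const


theorem adjoint_lagrangian_identity
    (n : ℕ) (hn : 1 ≤ n) (H : Em n × Em n → ℝ) (hH : Tonelli H)
    (lam eps : ℝ) (hlam : lam ∈ Set.Ioc (0:ℝ) 1) (heps : eps ∈ Set.Ioc (0:ℝ) 1)
    (x₀ : Em n) (u : Em n → ℝ) (hu : ClassicalSol H lam eps u)
    (θ : Em n → ℝ) (hθ : AdjointDensity H lam eps u x₀ θ) :
    (∫ x in cube n, Lag H x (Hp H x (gradient u x)) * θ x) = lam * u x₀ := by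
  obtain ⟨husm, hup, heqn⟩ := hu
  obtain ⟨hθp, hθnn, hθint, hθ1, hadj⟩ := hθ
  have hA := hadj u husm hup
  have hGcont : Continuous (fun x => gradient u x) := gradient_continuous husm
  have hVcont : Continuous (fun x => Hp H x (gradient u x)) := Hp_continuous H hH hGcont
  have hAcont : Continuous (fun x =>
      ⟪gradient u x, Hp H x (gradient u x)⟫ - eps * lap u x) :=
    (hGcont.inner hVcont).sub (continuous_const.mul (lap_continuous husm))
  have hucont : Continuous u := husm.continuous
  have hint1 : IntegrableOn (fun x =>
      (⟪gradient u x, Hp H x (gradient u x)⟫ - eps * lap u x) * θ x) (cube n) :=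
    integrable_mul_density hAcont hθnn hθint
  have hint2 : IntegrableOn (fun x => u x * θ x) (cube n) :=
    integrable_mul_density hucont hθnn hθint
  have key : ∀ x, Lag H x (Hp H x (gradient u x)) * θ x
      = (⟪gradient u x, Hp H x (gradient u x)⟫ - eps * lap u x) * θ x
        + lam * (u x * θ x) := by
    intro x
    rw [legendre_eq H hH x (gradient u x)]
    have h1 := heqn x
    have h2 : ⟪Hp H x (gradient u x), gradient u x⟫
        = ⟪gradient u x, Hp H x (gradient u x)⟫ := real_inner_comm _ _
    rw [h2]
    have h3 : H (x, gradient u x) = eps * lap u x - lam * u x := by linarith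
    rw [h3]
    ring
  calc (∫ x in cube n, Lag H x (Hp H x (gradient u x)) * θ x)
      = ∫ x in cube n, ((⟪gradient u x, Hp H x (gradient u x)⟫ - eps * lap u x) * θ x
          + lam * (u x * θ x)) :=
        integral_congr_ae (Filter.Eventually.of_forall fun x => key x)
    _ = (∫ x in cube n, (⟪gradient u x, Hp H x (gradient u x)⟫ - eps * lap u x) * θ x)
          + ∫ x in cube n, lam * (u x * θ x) :=
        integral_add hint1 (hint2.const_mul lam)
    _ = (lam * u x₀ - lam * ∫ x in cube n, u x * θ x)
          + lam * ∫ x in cube n, u x * θ x := by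
        rw [hA, MeasureTheory.integral_const_mul]
    _ = lam * u x₀ := by ring

end
end

section
/- Let n ≥ 1, let H : ℝⁿ × ℝⁿ → ℝ be of class C², let λ, ε > 0 and x₀ ∈ ℝⁿ. Let u, v : ℝⁿ → ℝ be ℤⁿ-periodic C² functions satisfying ⟨∂H/∂p(x, Du(x)), Dv(x)⟩ + λv(x) = Δu(x) + εΔv(x) for all x ∈ ℝⁿ, and let θ be a weak adjoint density for u at x₀ (with parameters λ, ε). Then λ|v(x₀)| ≤ (∫_{[0,1)ⁿ} |Δu(x)|² θ(x) dx)^{1/2}. -/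
open MeasureTheory Real Filter
open scoped RealInnerProductSpace

noncomputable section

theorem adjoint_linearized_estimate
    (n : ℕ) (hn : 1 ≤ n) (H : Em n × Em n → ℝ) (hH : ContDiff ℝ 2 H)
    (lam eps : ℝ) (hlam : 0 < lam) (heps : 0 < eps) (x₀ : Em n)
    (u v : Em n → ℝ) (hu : ContDiff ℝ 2 u) (hup : ZPeriodic u)
    (hv : ContDiff ℝ 2 v) (hvp : ZPeriodic v)
    (heq : ∀ x : Em n,
      ⟪Hp H x (gradient u x), gradient v x⟫ + lam * v x = lap u x + eps * lap v x)
    (θ : Em n → ℝ) (hθ : AdjointDensity H lam eps u x₀ θ) :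
    lam * |v x₀| ≤ Real.sqrt (∫ x in cube n, (lap u x)^2 * θ x) := by
  obtain ⟨hθp, hθ0, hθint, hθ1, hθadj⟩ := hθ
  set f : Em n → ℝ := lap u with hf
  -- continuity of lap u
  have hfc : Continuous f := by
    have h1 : Continuous (iteratedFDeriv ℝ 2 u) :=
      hu.continuous_iteratedFDeriv le_rfl
    have : Continuous fun x => ∑ i, iteratedFDeriv ℝ 2 u x
        ![EuclideanSpace.single i 1, EuclideanSpace.single i 1] := by
      apply continuous_finset_sum
      intro i _
      exact (ContinuousMultilinearMap.apply ℝ (fun _ : Fin 2 => Em n) ℝ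
        ![EuclideanSpace.single i 1, EuclideanSpace.single i 1]).continuous.comp h1
    exact this
  have hvc : Continuous v := hv.continuous
  -- measurability of the cube
  have hmeas : MeasurableSet (cube n) := by
    have : cube n = ⋂ i, (fun x : Em n => x i) ⁻¹' Set.Ico (0:ℝ) 1 := by
      ext x; simp [cube]
    rw [this]
    exact MeasurableSet.iInter fun i =>
      (EuclideanSpace.proj i).continuous.measurable measurableSet_Ico
  -- compact set containing the cube
  set K : Set (Em n) := {x | ∀ i, x i ∈ Set.Icc (0:ℝ) 1} with hKdef
  have hKc : IsCompact K := by
    have : K = (EuclideanSpace.equiv (Fin n) ℝ).toHomeomorph ⁻¹'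
        (Set.univ.pi fun _ : Fin n => Set.Icc (0:ℝ) 1) := by
      ext x
      simp only [hKdef, Set.mem_setOf_eq, Set.mem_preimage, ContinuousLinearEquiv.coe_toHomeomorph,
        Set.mem_pi, Set.mem_univ, forall_true_left, true_implies]
      rfl
    rw [this]
    exact (Homeomorph.isCompact_preimage _).mpr (isCompact_univ_pi fun _ => isCompact_Icc)
  have hsub : cube n ⊆ K := fun x hx i => ⟨(hx i).1, le_of_lt (hx i).2⟩
  obtain ⟨Cf, hCf⟩ := hKc.exists_bound_of_continuousOn hfc.continuousOn
  obtain ⟨Cv, hCv⟩ := hKc.exists_bound_of_continuousOn hvc.continuousOn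
  -- integrability facts
  have aebound : ∀ (g : Em n → ℝ) (C : ℝ), (∀ x ∈ K, ‖g x‖ ≤ C) →
      ∀ᵐ x ∂(volume.restrict (cube n)), ‖g x‖ ≤ C := fun g C h =>
    (ae_restrict_iff' hmeas).mpr (ae_of_all _ fun x hx => h x (hsub hx))
  have int_fθ : IntegrableOn (fun x => f x * θ x) (cube n) :=
    Integrable.bdd_mul hθint hfc.aestronglyMeasurable.restrict (aebound f Cf hCf)
  have int_vθ : IntegrableOn (fun x => v x * θ x) (cube n) := by
    exact Integrable.bdd_mul hθint hvc.aestronglyMeasurable.restrict (aebound v Cv hCv)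
  have hCf2 : ∀ x ∈ K, ‖f x ^ 2‖ ≤ Cf ^ 2 := by
    intro x hx
    have := hCf x hx
    calc ‖f x ^ 2‖ = ‖f x‖ ^ 2 := by rw [norm_pow]
    _ ≤ Cf ^ 2 := by exact pow_le_pow_left₀ (norm_nonneg _) this 2
  have int_f2θ : IntegrableOn (fun x => f x ^ 2 * θ x) (cube n) :=
    Integrable.bdd_mul hθint ((hfc.pow 2).aestronglyMeasurable.restrict) (aebound _ _ hCf2)
  -- the adjoint identity applied to ψ = v
  have key0 := hθadj v hv hvp
  have hrw : ∀ x : Em n,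
      (⟪gradient v x, Hp H x (gradient u x)⟫ - eps * lap v x) * θ x
        = f x * θ x - lam * (v x * θ x) := by
    intro x
    have h := heq x
    have hcomm : ⟪gradient v x, Hp H x (gradient u x)⟫
        = ⟪Hp H x (gradient u x), gradient v x⟫ := real_inner_comm _ _
    rw [hcomm]
    have hA : inner ℝ (Hp H x (gradient u x)) (gradient v x)
        = f x + eps * lap v x - lam * v x := by linarith
    rw [hA]; ring
  rw [show (fun x => (⟪gradient v x, Hp H x (gradient u x)⟫ - eps * lap v x) * θ x)
      = fun x => f x * θ x - lam * (v x * θ x) from funext hrw] at key0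
  rw [integral_sub int_fθ (int_vθ.const_mul lam), integral_const_mul] at key0
  have key : (∫ x in cube n, f x * θ x) = lam * v x₀ := by linarith
  set t : ℝ := lam * v x₀ with ht
  -- Cauchy–Schwarz via the quadratic trick
  have hquad : 0 ≤ ∫ x in cube n, (f x - t) ^ 2 * θ x :=
    setIntegral_nonneg hmeas fun x _ => mul_nonneg (sq_nonneg _) (hθ0 x)
  have hexp : (fun x => (f x - t) ^ 2 * θ x)
      = fun x => (f x ^ 2 * θ x - (2 * t) * (f x * θ x)) + t ^ 2 * θ x :=
    funext fun x => by ring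
  have i1 : IntegrableOn (fun x => f x ^ 2 * θ x - 2 * t * (f x * θ x)) (cube n) :=
    int_f2θ.sub (int_fθ.const_mul (2 * t))
  have i2 : IntegrableOn (fun x => t ^ 2 * θ x) (cube n) := hθint.const_mul (t ^ 2)
  rw [hexp, integral_add i1 i2, integral_sub int_f2θ (int_fθ.const_mul (2 * t)),
    integral_const_mul, integral_const_mul, key, hθ1] at hquad
  have hsq : t ^ 2 ≤ ∫ x in cube n, f x ^ 2 * θ x := by nlinarith
  have : lam * |v x₀| = |t| := by
    rw [ht, abs_mul, abs_of_pos hlam]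
  rw [this, ← Real.sqrt_sq_eq_abs]
  exact Real.sqrt_le_sqrt hsq

end
end

section
/- Let n ≥ 1 and let H : ℝⁿ × ℝⁿ → ℝ be a Tonelli Hamiltonian. Then there exists a constant C₄ > 0, depending only on H, such that for all λ, ε ∈ (0,1], if u^ε is a classical solution of the viscous discounted equation λu^ε + H(x, Du^ε) = εΔu^ε and u_λ is a ℤⁿ-periodic continuous viscosity solution of λu_λ + H(x, Du_λ) = 0, then sup_{x∈ℝⁿ} |u^ε(x) − u_λ(x)| ≤ C₄ √ε / λ. -/
open MeasureTheory Real Filter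
open scoped RealInnerProductSpace

noncomputable section

namespace VDSE

variable {n : ℕ}

/-- The closed unit cube. -/
def Kc (n : ℕ) : Set (Em n) := {x | ∀ i, x i ∈ Set.Icc (0:ℝ) 1}

lemma exists_rep (x : Em n) : ∃ k : Fin n → ℤ, x + intVec k ∈ Kc n := by
  refine ⟨fun i => -⌊x i⌋, fun i => ?_⟩
  have h : (x + intVec (fun i => -⌊x i⌋)) i = Int.fract (x i) := by
    rw [PiLp.add_apply]
    simp only [intVec, Int.cast_neg, Int.fract]
    ring
  rw [h]
  exact ⟨Int.fract_nonneg _, (Int.fract_lt_one _).le⟩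

lemma isCompact_Kc : IsCompact (Kc n) := by
  apply Metric.isCompact_of_isClosed_isBounded
  · have : Kc n = ⋂ i, (fun x : Em n => x i) ⁻¹' Set.Icc (0:ℝ) 1 := by
      ext x; simp [Kc, Set.mem_iInter]
    rw [this]
    exact isClosed_iInter fun i => isClosed_Icc.preimage (EuclideanSpace.proj i).continuous
  · apply Metric.isBounded_closedBall (x := (0 : Em n)) (r := Real.sqrt n) |>.subset
    intro x hx
    simp only [Metric.mem_closedBall, dist_zero_right]
    rw [EuclideanSpace.norm_eq]
    apply Real.sqrt_le_sqrt
    calc ∑ i, ‖x i‖ ^ 2 ≤ ∑ _i : Fin n, (1:ℝ) := by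
          apply Finset.sum_le_sum
          intro i _
          have := hx i
          have h1 : |x i| ≤ 1 := abs_le.2 ⟨by linarith [this.1], this.2⟩
          calc ‖x i‖^2 = |x i|^2 := by rw [Real.norm_eq_abs]
            _ ≤ 1^2 := by apply pow_le_pow_left₀ (abs_nonneg _) h1 2
            _ = 1 := one_pow 2
      _ = (n : ℝ) := by simp

lemma Kc_nonempty : (Kc n).Nonempty := ⟨0, fun i => by simp [Set.mem_Icc]⟩

lemma ZPeriodic.exists_max {u : Em n → ℝ} (hc : Continuous u) (hp : ZPeriodic u) :
    ∃ x₀, ∀ x, u x ≤ u x₀ := by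
  obtain ⟨x₀, _, hmax⟩ := isCompact_Kc.exists_isMaxOn Kc_nonempty hc.continuousOn
  refine ⟨x₀, fun x => ?_⟩
  obtain ⟨k, hk⟩ := exists_rep x
  calc u x = u (x + intVec k) := (hp x k).symm
    _ ≤ u x₀ := hmax hk

lemma ZPeriodic.exists_min {u : Em n → ℝ} (hc : Continuous u) (hp : ZPeriodic u) :
    ∃ x₀, ∀ x, u x₀ ≤ u x := by
  obtain ⟨x₀, h⟩ := ZPeriodic.exists_max (u := fun x => -u x) hc.neg (fun x k => by simp [hp x k])
  exact ⟨x₀, fun x => by linarith [h x]⟩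


/-- 1D: at a local max, if `φ' = ψ` and `ψ'(0) = A`, then `A ≤ 0`. -/
lemma oneD_test {φ ψ : ℝ → ℝ} {A : ℝ} (hd : ∀ t, HasDerivAt φ (ψ t) t)
    (hψ : HasDerivAt ψ A 0) (hmax : IsLocalMax φ 0) : A ≤ 0 := by
  by_contra hA
  push_neg at hA
  have hψ0 : ψ 0 = 0 := by
    have h := hmax.deriv_eq_zero
    rwa [(hd 0).deriv] at h
  have hslope := hasDerivAt_iff_tendsto_slope.1 hψ
  have hev : ∀ᶠ t in nhdsWithin (0:ℝ) {(0:ℝ)}ᶜ, A/2 < slope ψ 0 t :=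
    hslope.eventually (eventually_gt_nhds (by linarith))
  rw [eventually_nhdsWithin_iff] at hev
  obtain ⟨δ, hδ, hball⟩ := Metric.eventually_nhds_iff.1 hev
  have hψpos : ∀ t ∈ Set.Ioo (0:ℝ) δ, 0 < ψ t := by
    intro t ht
    have h1 : dist t 0 < δ := by
      rw [Real.dist_eq, sub_zero, abs_of_pos ht.1]; exact ht.2
    have h2 := hball h1 (by simp [ne_of_gt ht.1])
    rw [slope_def_field, hψ0, sub_zero, sub_zero] at h2
    have h3 : A/2 * t < ψ t := (lt_div_iff₀ ht.1).1 h2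
    nlinarith [ht.1]
  have hφmono : StrictMonoOn φ (Set.Icc 0 (δ/2)) := by
    apply strictMonoOn_of_deriv_pos (convex_Icc _ _)
    · exact (Continuous.continuousOn (by
        exact continuous_iff_continuousAt.2 fun t => (hd t).differentiableAt.continuousAt))
    · intro t ht
      rw [interior_Icc] at ht
      rw [(hd t).deriv]
      exact hψpos t ⟨ht.1, lt_of_lt_of_le ht.2 (by linarith)⟩
  obtain ⟨ρ, hρ, hloc⟩ := Metric.eventually_nhds_iff.1 hmax
  set t := min (δ/4) (ρ/2) with ht_def
  have ht0 : 0 < t := lt_min (by linarith) (by linarith)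
  have h1 : φ 0 < φ t := hφmono ⟨le_rfl, by positivity⟩
    ⟨ht0.le, le_trans (min_le_left _ _) (by linarith)⟩ ht0
  have h2 : φ t ≤ φ 0 := hloc (by
    rw [Real.dist_eq, sub_zero, abs_of_pos ht0]
    exact lt_of_le_of_lt (min_le_right _ _) (by linarith))
  linarith

/-- Second-derivative test, max version. -/
lemma iterated_test_max {g : Em n → ℝ} (hg : ContDiff ℝ 2 g) {x v : Em n}
    (h : IsLocalMax g x) : iteratedFDeriv ℝ 2 g x ![v, v] ≤ 0 := by
  rw [iteratedFDeriv_two_apply]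
  simp only [Matrix.cons_val_zero, Matrix.cons_val_one, Matrix.head_cons]
  set ℓ : ℝ → Em n := fun t => x + t • v with hℓ_def
  have hℓd : ∀ t, HasDerivAt ℓ v t := by
    intro t
    have := ((hasDerivAt_id t).smul_const v).const_add x
    simpa [hℓ_def] using this
  have hℓ0 : ℓ 0 = x := by simp [hℓ_def]
  have hgdiff : Differentiable ℝ g := hg.differentiable (by norm_num)
  have hΦ : ContDiff ℝ 1 (fderiv ℝ g) := hg.fderiv_right (le_refl _)
  set ψ : ℝ → ℝ := fun t => fderiv ℝ g (ℓ t) v with hψ_def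
  have hd : ∀ t, HasDerivAt (fun t => g (ℓ t)) (ψ t) t := fun t =>
    (hgdiff (ℓ t)).hasFDerivAt.comp_hasDerivAt t (hℓd t)
  have hψ : HasDerivAt ψ (fderiv ℝ (fderiv ℝ g) x v v) 0 := by
    have h1 : HasDerivAt (fun t => fderiv ℝ g (ℓ t)) (fderiv ℝ (fderiv ℝ g) x v) 0 := by
      have hx := ((hΦ.differentiable one_ne_zero) (ℓ 0)).hasFDerivAt.comp_hasDerivAt 0 (hℓd 0)
      rwa [hℓ0] at hx
      
    have h2 := (ContinuousLinearMap.apply ℝ ℝ v).hasFDerivAt.comp_hasDerivAt 0 h1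
    exact h2
  have hmax' : IsLocalMax (fun t => g (ℓ t)) 0 := by
    have hcont : ContinuousAt ℓ 0 := (hℓd 0).continuousAt
    have : Filter.Tendsto ℓ (nhds 0) (nhds x) := by rw [← hℓ0]; exact hcont
    exact (this.eventually h).mono (fun t ht => by simpa [hℓ0] using ht)
  exact oneD_test hd hψ hmax'

lemma iterated_test_min {g : Em n → ℝ} (hg : ContDiff ℝ 2 g) {x v : Em n}
    (h : IsLocalMin g x) : 0 ≤ iteratedFDeriv ℝ 2 g x ![v, v] := by
  have := iterated_test_max (g := -g) (v := v) hg.neg h.neg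
  rw [iteratedFDeriv_neg_apply] at this
  simp only [ContinuousMultilinearMap.neg_apply] at this
  linarith


/-! ### Quadratic functions -/

lemma quad_contDiff (c : ℝ) (a : Em n) : ContDiff ℝ 2 (fun x : Em n => c * ‖x - a‖ ^ 2) :=
  contDiff_const.mul ((contDiff_id.sub contDiff_const).norm_sq ℝ)

lemma quad_hasFDerivAt (c : ℝ) (a x : Em n) :
    HasFDerivAt (fun y : Em n => c * ‖y - a‖ ^ 2) ((2*c) • (innerSL ℝ (x - a))) x := by
  have h1 : HasFDerivAt (fun y : Em n => y - a) (ContinuousLinearMap.id ℝ (Em n)) x :=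
    (hasFDerivAt_id x).sub_const a
  have h3 := h1.norm_sq.const_mul c
  refine h3.congr_fderiv ?_
  ext w
  simp only [ContinuousLinearMap.smul_apply, ContinuousLinearMap.comp_apply,
    ContinuousLinearMap.coe_id', id_eq, innerSL_apply_apply, smul_eq_mul, two_smul,
    ContinuousLinearMap.add_apply]
  ring

lemma quad_gradient (c : ℝ) (a x : Em n) :
    gradient (fun y : Em n => c * ‖y - a‖ ^ 2) x = (2*c) • (x - a) := by
  apply HasGradientAt.gradient
  rw [hasGradientAt_iff_hasFDerivAt]
  refine (quad_hasFDerivAt c a x).congr_fderiv ?_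
  ext w
  simp only [InnerProductSpace.toDual_apply_apply, ContinuousLinearMap.smul_apply, innerSL_apply_apply,
    smul_eq_mul, real_inner_smul_left]

lemma quad_second (c : ℝ) (a x v w : Em n) :
    iteratedFDeriv ℝ 2 (fun y : Em n => c * ‖y - a‖ ^ 2) x ![v, w] = 2*c*⟪v, w⟫ := by
  set χ : Em n → ℝ := fun y => c * ‖y - a‖ ^ 2 with hχ
  rw [iteratedFDeriv_two_apply]
  simp only [Matrix.cons_val_zero, Matrix.cons_val_one, Matrix.head_cons]
  have hΦdiff : DifferentiableAt ℝ (fderiv ℝ χ) x :=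
    (((quad_contDiff c a).fderiv_right le_rfl).differentiable one_ne_zero) x
  have key : fderiv ℝ (fun y => (fderiv ℝ χ y) w) x = (fderiv ℝ (fderiv ℝ χ) x).flip w := by
    have := fderiv_clm_apply (c := fderiv ℝ χ) (u := fun _ => w) hΦdiff
      (differentiableAt_const w)
    rw [this]
    simp
  have hfun : (fun y => (fderiv ℝ χ y) w)
      = fun y => (2*c) * ((innerSL ℝ w) y) - (2*c) * ((innerSL ℝ w) a) := by
    funext y
    rw [(quad_hasFDerivAt c a y).fderiv]
    simp only [ContinuousLinearMap.smul_apply, innerSL_apply_apply, smul_eq_mul]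
    rw [real_inner_comm, inner_sub_right]
    ring
  have hder : HasFDerivAt (fun y => (2*c) * ((innerSL ℝ w) y) - (2*c) * ((innerSL ℝ w) a))
      ((2*c) • (innerSL ℝ w)) x := by
    exact (((innerSL ℝ w).hasFDerivAt).const_mul (2*c)).sub_const _
  have : (fderiv ℝ (fderiv ℝ χ) x).flip w v = ((2*c) • (innerSL ℝ w)) v := by
    rw [← key, hfun, hder.fderiv]
  rw [show (fderiv ℝ (fderiv ℝ χ) x) v w = (fderiv ℝ (fderiv ℝ χ) x).flip w v from rfl, this]
  simp only [ContinuousLinearMap.smul_apply, innerSL_apply_apply, smul_eq_mul]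
  rw [real_inner_comm]

lemma quad_lap (c : ℝ) (a x : Em n) :
    lap (fun y : Em n => c * ‖y - a‖ ^ 2) x = 2*c*n := by
  unfold lap
  have : ∀ i : Fin n, iteratedFDeriv ℝ 2 (fun y : Em n => c * ‖y - a‖ ^ 2) x
      ![EuclideanSpace.single i 1, EuclideanSpace.single i 1] = 2*c := by
    intro i
    rw [quad_second]
    have : ⟪(EuclideanSpace.single i (1:ℝ)), (EuclideanSpace.single i (1:ℝ))⟫ = (1:ℝ) := by
      rw [real_inner_self_eq_norm_sq, EuclideanSpace.norm_single]
      norm_num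
    rw [this]
    ring
  rw [Finset.sum_congr rfl (fun i _ => this i)]
  simp [mul_comm]

/-! ### Extremum comparison lemmas -/

lemma gradient_eq_of_isLocalMax {f q : Em n → ℝ} {x : Em n} (hf : DifferentiableAt ℝ f x)
    (hq : DifferentiableAt ℝ q x) (h : IsLocalMax (fun y => f y - q y) x) :
    gradient f x = gradient q x := by
  have h0 : fderiv ℝ (fun y => f y - q y) x = 0 := h.fderiv_eq_zero
  rw [fderiv_fun_sub hf hq, sub_eq_zero] at h0
  unfold gradient
  rw [h0]

lemma gradient_eq_of_isLocalMin {f q : Em n → ℝ} {x : Em n} (hf : DifferentiableAt ℝ f x)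
    (hq : DifferentiableAt ℝ q x) (h : IsLocalMin (fun y => f y - q y) x) :
    gradient f x = gradient q x := by
  have h0 : fderiv ℝ (fun y => f y - q y) x = 0 := h.fderiv_eq_zero
  rw [fderiv_fun_sub hf hq, sub_eq_zero] at h0
  unfold gradient
  rw [h0]

lemma iterated_split {f q : Em n → ℝ} (hf : ContDiff ℝ 2 f) (hq : ContDiff ℝ 2 q)
    (x : Em n) (m : Fin 2 → Em n) :
    iteratedFDeriv ℝ 2 f x m
      = iteratedFDeriv ℝ 2 (fun y => f y - q y) x m + iteratedFDeriv ℝ 2 q x m := by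
  have hrw : f = (fun y => f y - q y) + q := funext fun y => by simp
  conv_lhs => rw [hrw]
  rw [iteratedFDeriv_add_apply (hf.sub hq).contDiffAt hq.contDiffAt]
  rfl

lemma lap_le_of_isLocalMax {f q : Em n → ℝ} (hf : ContDiff ℝ 2 f) (hq : ContDiff ℝ 2 q)
    {x : Em n} (h : IsLocalMax (fun y => f y - q y) x) : lap f x ≤ lap q x := by
  unfold lap
  apply Finset.sum_le_sum
  intro i _
  rw [iterated_split hf hq]
  have := iterated_test_max (hf.sub hq) (v := EuclideanSpace.single i 1) h
  linarith

lemma lap_ge_of_isLocalMin {f q : Em n → ℝ} (hf : ContDiff ℝ 2 f) (hq : ContDiff ℝ 2 q)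
    {x : Em n} (h : IsLocalMin (fun y => f y - q y) x) : lap q x ≤ lap f x := by
  unfold lap
  apply Finset.sum_le_sum
  intro i _
  rw [iterated_split hf hq]
  have := iterated_test_min (hf.sub hq) (v := EuclideanSpace.single i 1) h
  linarith


/-! ### Translation invariance of fderiv -/

lemma fderiv_of_periodic {E F : Type*} [NormedAddCommGroup E] [NormedSpace ℝ E]
    [NormedAddCommGroup F] [NormedSpace ℝ F] {f : E → F} (hf : Differentiable ℝ f) {v : E}
    (hper : ∀ z, f (z + v) = f z) (z : E) : fderiv ℝ f (z + v) = fderiv ℝ f z := by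
  have h1 : HasFDerivAt (fun w : E => w + v) (ContinuousLinearMap.id ℝ E) z :=
    (hasFDerivAt_id z).add_const v
  have h2 := (hf (z + v)).hasFDerivAt.comp z h1
  rw [ContinuousLinearMap.comp_id] at h2
  have h3 : (f ∘ fun w : E => w + v) = f := funext fun w => hper w
  rw [h3] at h2
  exact (h2.fderiv).symm

/-! ### Smoothed cone function -/

lemma sqrt_quad_contDiff (K η : ℝ) (hη : 0 < η) (z : Em n) :
    ContDiff ℝ 1 (fun y : Em n => K * Real.sqrt (‖y - z‖^2 + η^2)) := by
  apply contDiff_iff_contDiffAt.2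
  intro y
  have hpos : (0:ℝ) < ‖y - z‖^2 + η^2 := by positivity
  exact contDiffAt_const.mul
    (((((contDiff_id.sub contDiff_const).norm_sq ℝ).add contDiff_const).contDiffAt).sqrt
      (ne_of_gt hpos))

lemma sqrt_quad_hasGradientAt (K η : ℝ) (hη : 0 < η) (z y : Em n) :
    HasGradientAt (fun y : Em n => K * Real.sqrt (‖y - z‖^2 + η^2))
      ((K / Real.sqrt (‖y - z‖^2 + η^2)) • (y - z)) y := by
  have hs : (0:ℝ) < ‖y - z‖^2 + η^2 := by positivity
  have hss : Real.sqrt (‖y - z‖^2 + η^2) ≠ 0 := ne_of_gt (Real.sqrt_pos.2 hs)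
  have h0 : HasFDerivAt (fun w : Em n => w - z) (ContinuousLinearMap.id ℝ (Em n)) y :=
    (hasFDerivAt_id y).sub_const z
  have h1 := h0.norm_sq.add_const (η^2)
  have h2 := (Real.hasDerivAt_sqrt (ne_of_gt hs)).comp_hasFDerivAt y h1
  have h3 := h2.const_mul K
  apply hasGradientAt_iff_hasFDerivAt.2
  refine h3.congr_fderiv ?_
  ext w
  simp only [InnerProductSpace.toDual_apply_apply, ContinuousLinearMap.smul_apply,
    ContinuousLinearMap.comp_apply, ContinuousLinearMap.coe_id', id_eq, innerSL_apply_apply,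
    smul_eq_mul, two_smul, ContinuousLinearMap.add_apply, real_inner_smul_left, Function.comp]
  field_simp
  ring

/-! ### Doubling of variables: existence of a global max -/

lemma doubling {f g : Em n → ℝ} (hf : Continuous f) (hpf : ZPeriodic f)
    (hg : Continuous g) (hpg : ZPeriodic g) {c : ℝ} (hc : 0 < c) :
    ∃ xh yh : Em n, ∀ x y : Em n,
      f x - g y - c*‖x - y‖^2 ≤ f xh - g yh - c*‖xh - yh‖^2 := by
  obtain ⟨xM, hxM⟩ := ZPeriodic.exists_max hf hpf
  obtain ⟨xm, hxm⟩ := ZPeriodic.exists_min hf hpf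
  obtain ⟨yM, hyM⟩ := ZPeriodic.exists_max hg hpg
  obtain ⟨ym, hym⟩ := ZPeriodic.exists_min hg hpg
  set S : ℝ := f xM - g ym with hS
  set s : ℝ := f xm - g yM with hs
  have hSs : s ≤ S := by
    have := hxM xm; have := hxm xm; have := hyM ym; have := hym yM
    simp only [hS, hs]
    linarith [hxM xm, hym yM]
  set R : ℝ := Real.sqrt ((S - s + 1)/c) with hR
  have hR0 : 0 ≤ R := Real.sqrt_nonneg _
  have hcR : c * R^2 = S - s + 1 := by
    rw [hR, Real.sq_sqrt (div_nonneg (by linarith) hc.le)]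
    field_simp
  set G : Em n × Em n → ℝ := fun q => f q.1 - g (q.1 - q.2) - c*‖q.2‖^2 with hG
  have hGcont : Continuous G := by
    apply Continuous.sub
    · exact (hf.comp continuous_fst).sub (hg.comp (continuous_fst.sub continuous_snd))
    · exact continuous_const.mul ((continuous_snd.norm).pow 2)
  have hQcomp : IsCompact ((Kc n) ×ˢ Metric.closedBall (0 : Em n) R) :=
    isCompact_Kc.prod (isCompact_closedBall _ _)
  have hQne : ((Kc n) ×ˢ Metric.closedBall (0 : Em n) R).Nonempty :=
    ⟨(Kc_nonempty.some, 0), Kc_nonempty.some_mem, by simp [hR0]⟩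
  obtain ⟨⟨xh, wh⟩, hmemQ, hmaxQ⟩ := hQcomp.exists_isMaxOn hQne hGcont.continuousOn
  obtain ⟨x0, hx0⟩ := Kc_nonempty (n := n)
  have hlow : s ≤ G (xh, wh) := by
    have h0 : (x0, (0:Em n)) ∈ (Kc n) ×ˢ Metric.closedBall (0 : Em n) R :=
      ⟨hx0, by simp [hR0]⟩
    have h1 := hmaxQ h0
    have hval : G (x0, 0) = f x0 - g x0 := by simp [hG]
    rw [Set.mem_setOf_eq, hval] at h1
    exact le_trans (by linarith [hxm x0, hyM x0] : s ≤ f x0 - g x0) h1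
  have hglobal : ∀ x w : Em n, G (x, w) ≤ G (xh, wh) := by
    intro x w
    obtain ⟨k, hk⟩ := exists_rep x
    have hshift : G (x, w) = G (x + intVec k, w) := by
      simp only [hG]
      rw [hpf x k]
      have : x + intVec k - w = (x - w) + intVec k := by abel
      rw [this, hpg]
    rw [hshift]
    by_cases hw : ‖w‖ ≤ R
    · exact hmaxQ ⟨hk, by simpa [Metric.mem_closedBall, dist_zero_right] using hw⟩
    · push_neg at hw
      have h1 : G (x + intVec k, w) ≤ S - c*‖w‖^2 := by
        simp only [hG]
        have := hxM (x + intVec k)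
        have := hym (x + intVec k - w)
        linarith
      have h2 : c*R^2 ≤ c*‖w‖^2 := by
        apply mul_le_mul_of_nonneg_left _ hc.le
        exact pow_le_pow_left₀ hR0 hw.le 2
      linarith
  refine ⟨xh, xh - wh, fun x y => ?_⟩
  have h1 := hglobal x (x - y)
  have h2 : G (x, x - y) = f x - g y - c*‖x - y‖^2 := by
    simp only [hG]
    rw [sub_sub_cancel]
  have h3 : f xh - g (xh - wh) - c*‖xh - (xh - wh)‖^2 = G (xh, wh) := by
    simp only [hG]
    rw [sub_sub_cancel]
  rw [h2, ← h3] at h1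
  exact h1


/-! ### Constants attached to a Tonelli Hamiltonian -/

lemma exists_C0 {H : Em n × Em n → ℝ} (hH : Tonelli H) :
    ∃ C₀ : ℝ, 0 ≤ C₀ ∧ ∀ x, |H (x, 0)| ≤ C₀ := by
  have hcont : Continuous (fun x : Em n => |H (x, 0)|) :=
    (hH.smooth.continuous.comp (continuous_id.prodMk continuous_const)).abs
  have hper : ZPeriodic (fun x : Em n => |H (x, 0)|) := fun x k => by
    show |H (x + intVec k, 0)| = |H (x, 0)|
    rw [hH.periodic x 0 k]
  obtain ⟨x₀, hx₀⟩ := ZPeriodic.exists_max hcont hper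
  exact ⟨|H (x₀, 0)|, abs_nonneg _, hx₀⟩

lemma exists_K {H : Em n × Em n → ℝ} (hH : Tonelli H) {C₀ : ℝ} (hC₀ : 0 ≤ C₀) :
    ∃ K : ℝ, 0 < K ∧ ∀ x p : Em n, K/2 ≤ ‖p‖ → C₀ < H (x, p) := by
  obtain ⟨R, hR⟩ := hH.superlinear (C₀ + 1)
  refine ⟨2 * max R 1, by positivity, fun x p hp => ?_⟩
  have h1 : R ≤ ‖p‖ := le_trans (le_max_left R 1) (by linarith [hp, le_of_eq (by ring : 2 * max R 1 / 2 = max R 1)])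
  have h2 : (1:ℝ) ≤ ‖p‖ := le_trans (le_max_right R 1) (by linarith [hp])
  have h3 := hR x p h1
  nlinarith

lemma exists_M {H : Em n × Em n → ℝ} (hH : Tonelli H) {K : ℝ} (hK : 0 < K) :
    ∃ M : ℝ, 0 ≤ M ∧ ∀ x y p : Em n, ‖p‖ ≤ 2*K → |H (x, p) - H (y, p)| ≤ M * ‖x - y‖ := by
  have hHdiff : Differentiable ℝ H := hH.smooth.differentiable two_ne_zero
  have hfc : Continuous fun q : Em n × Em n => ‖fderiv ℝ H q‖ :=
    (hH.smooth.continuous_fderiv two_ne_zero).norm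
  have hQcomp : IsCompact ((Kc n) ×ˢ Metric.closedBall (0 : Em n) (2*K)) :=
    isCompact_Kc.prod (isCompact_closedBall _ _)
  have hQne : ((Kc n) ×ˢ Metric.closedBall (0 : Em n) (2*K)).Nonempty :=
    ⟨(Kc_nonempty.some, 0), Kc_nonempty.some_mem, by
      simpa using (by positivity : (0:ℝ) ≤ 2*K)⟩
  obtain ⟨q₀, _, hq₀⟩ := hQcomp.exists_isMaxOn hQne hfc.continuousOn
  set M : ℝ := ‖fderiv ℝ H q₀‖ with hM
  refine ⟨M, norm_nonneg _, fun x y p hp => ?_⟩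
  -- global bound on the fderiv over the strip
  have hbound : ∀ w : Em n, ‖fderiv ℝ H (w, p)‖ ≤ M := by
    intro w
    obtain ⟨k, hk⟩ := exists_rep w
    have hper : ∀ z : Em n × Em n, H (z + (intVec k, (0:Em n))) = H z := by
      intro z
      have : z + (intVec k, (0:Em n)) = (z.1 + intVec k, z.2) := by
        ext <;> simp
      rw [this, hH.periodic]
    have heq : fderiv ℝ H ((w, p) + (intVec k, (0:Em n))) = fderiv ℝ H (w, p) :=
      fderiv_of_periodic hHdiff hper (w, p)
    have hmem : ((w, p) + (intVec k, (0:Em n))) ∈ (Kc n) ×ˢ Metric.closedBall (0 : Em n) (2*K) := by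
      constructor
      · show (w + intVec k) ∈ Kc n
        exact hk
      · show (p + 0) ∈ Metric.closedBall (0 : Em n) (2*K)
        simpa [Metric.mem_closedBall, dist_zero_right] using hp
    have h5 : ‖fderiv ℝ H ((w, p) + (intVec k, (0:Em n)))‖ ≤ M := hq₀ hmem
    rw [heq] at h5
    exact h5
  -- the section x ↦ H (x, p)
  have hsec : ∀ w : Em n, HasFDerivAt (fun x : Em n => H (x, p))
      ((fderiv ℝ H (w, p)).comp ((ContinuousLinearMap.id ℝ (Em n)).prod 0)) w := by
    intro w
    exact (hHdiff (w, p)).hasFDerivAt.comp w ((hasFDerivAt_id w).prodMk (hasFDerivAt_const p w))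
  have hsecbound : ∀ w : Em n, ‖fderiv ℝ (fun x : Em n => H (x, p)) w‖ ≤ M := by
    intro w
    rw [(hsec w).fderiv]
    calc ‖(fderiv ℝ H (w, p)).comp ((ContinuousLinearMap.id ℝ (Em n)).prod 0)‖
        ≤ ‖fderiv ℝ H (w, p)‖ * ‖(ContinuousLinearMap.id ℝ (Em n)).prod (0 : Em n →L[ℝ] Em n)‖ :=
          ContinuousLinearMap.opNorm_comp_le _ _
      _ ≤ M * 1 := by
          apply mul_le_mul (hbound w) ?_ (norm_nonneg _) (le_trans (norm_nonneg _) (hbound w))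
          apply ContinuousLinearMap.opNorm_le_bound _ zero_le_one
          intro u
          rw [one_mul]
          have : ‖((ContinuousLinearMap.id ℝ (Em n)).prod (0 : Em n →L[ℝ] Em n)) u‖
              = max ‖u‖ ‖(0 : Em n)‖ := rfl
          rw [this]
          simp
      _ = M := mul_one M
  have := convex_univ.norm_image_sub_le_of_norm_fderiv_le
    (f := fun x : Em n => H (x, p)) (C := M)
    (fun w _ => ((hsec w).differentiableAt)) (fun w _ => hsecbound w)
    (Set.mem_univ y) (Set.mem_univ x)
  simpa [Real.norm_eq_abs] using this


/-! ### Sup bounds on solutions -/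

lemma visc_sup_bound {H : Em n × Em n → ℝ} {lam : ℝ} {u : Em n → ℝ} {C₀ : ℝ}
    (hlam : 0 < lam) (hC₀ : ∀ x, |H (x, 0)| ≤ C₀) (hv : ViscositySol H lam u) :
    ∀ x, -C₀ ≤ lam * u x ∧ lam * u x ≤ C₀ := by
  obtain ⟨hcont, hper, htest⟩ := hv
  obtain ⟨xM, hxM⟩ := ZPeriodic.exists_max hcont hper
  obtain ⟨xm, hxm⟩ := ZPeriodic.exists_min hcont hper
  have hmax : IsLocalMax (fun y => u y - (fun _ : Em n => (0:ℝ)) y) xM :=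
    Filter.Eventually.of_forall fun y => by simpa using hxM y
  have hmin : IsLocalMin (fun y => u y - (fun _ : Em n => (0:ℝ)) y) xm :=
    Filter.Eventually.of_forall fun y => by simpa using hxm y
  have h1 := (htest (fun _ => (0:ℝ)) contDiff_const).1 xM hmax
  have h2 := (htest (fun _ => (0:ℝ)) contDiff_const).2 xm hmin
  rw [gradient_fun_const] at h1 h2
  intro x
  have hM := mul_le_mul_of_nonneg_left (hxM x) hlam.le
  have hm := mul_le_mul_of_nonneg_left (hxm x) hlam.le
  have hb1 := hC₀ xM
  have hb2 := hC₀ xm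
  rw [abs_le] at hb1 hb2
  exact ⟨by linarith, by linarith⟩

lemma classical_sup_bound {H : Em n × Em n → ℝ} {lam eps : ℝ} {u : Em n → ℝ} {C₀ : ℝ}
    (hlam : 0 < lam) (heps : 0 < eps) (hC₀ : ∀ x, |H (x, 0)| ≤ C₀)
    (hc : ClassicalSol H lam eps u) :
    ∀ x, -C₀ ≤ lam * u x ∧ lam * u x ≤ C₀ := by
  obtain ⟨hsm, hper, heq⟩ := hc
  have hcont : Continuous u := hsm.continuous
  obtain ⟨xM, hxM⟩ := ZPeriodic.exists_max hcont hper
  obtain ⟨xm, hxm⟩ := ZPeriodic.exists_min hcont hper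
  have hmaxloc : IsLocalMax u xM := Filter.Eventually.of_forall hxM
  have hminloc : IsLocalMin u xm := Filter.Eventually.of_forall hxm
  -- gradient vanishes at extrema
  have hgM : gradient u xM = 0 := by
    unfold gradient
    rw [hmaxloc.fderiv_eq_zero]
    simp
  have hgm : gradient u xm = 0 := by
    unfold gradient
    rw [hminloc.fderiv_eq_zero]
    simp
  -- Laplacian signs at extrema
  have hlapM : lap u xM ≤ 0 := by
    unfold lap
    apply Finset.sum_nonpos
    intro i _
    exact iterated_test_max hsm hmaxloc
  have hlapm : 0 ≤ lap u xm := by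
    unfold lap
    apply Finset.sum_nonneg
    intro i _
    exact iterated_test_min hsm hminloc
  have e1 := heq xM
  have e2 := heq xm
  rw [hgM] at e1
  rw [hgm] at e2
  have hb1 := hC₀ xM
  have hb2 := hC₀ xm
  rw [abs_le] at hb1 hb2
  intro x
  have hM := mul_le_mul_of_nonneg_left (hxM x) hlam.le
  have hm := mul_le_mul_of_nonneg_left (hxm x) hlam.le
  have h3 : eps * lap u xM ≤ 0 := mul_nonpos_of_nonneg_of_nonpos heps.le hlapM
  have h4 : 0 ≤ eps * lap u xm := mul_nonneg heps.le hlapm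
  exact ⟨by linarith, by linarith⟩


/-! ### Lipschitz bound for the viscosity solution -/

lemma visc_lipschitz {H : Em n × Em n → ℝ} {lam : ℝ} {u : Em n → ℝ} {C₀ K : ℝ}
    (hlam : 0 < lam) (hC₀0 : 0 ≤ C₀) (hC₀ : ∀ x, |H (x, 0)| ≤ C₀)
    (hK : 0 < K) (hKprop : ∀ x p : Em n, K/2 ≤ ‖p‖ → C₀ < H (x, p))
    (hv : ViscositySol H lam u) :
    ∀ x z, u x - u z ≤ K * ‖x - z‖ := by
  have hbdd := visc_sup_bound hlam hC₀ hv
  have hosc : ∀ x z, u x - u z ≤ 2*C₀/lam := by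
    intro x z
    have h1 := (hbdd x).2
    have h2 := (hbdd z).1
    rw [le_div_iff₀ hlam]
    nlinarith
  intro x z
  by_contra hcon
  push_neg at hcon
  set ε : ℝ := u x - u z - K * ‖x - z‖ with hε_def
  have hε : 0 < ε := by linarith
  -- continuity at z
  obtain ⟨δ, hδ, hcl⟩ := Metric.continuousAt_iff.1 (hv.1.continuousAt (x := z)) (ε/2) (by linarith)
  set η : ℝ := min (δ/2) (ε/(2*K)) with hη_def
  have hη : 0 < η := lt_min (by linarith) (by positivity)
  set ψ : Em n → ℝ := fun y => K * Real.sqrt (‖y - z‖^2 + η^2) with hψ_def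
  have hψcd : ContDiff ℝ 1 ψ := sqrt_quad_contDiff K η hη z
  have hψlb : ∀ y, K * ‖y - z‖ ≤ ψ y := by
    intro y
    apply mul_le_mul_of_nonneg_left _ hK.le
    rw [show ‖y - z‖ = Real.sqrt (‖y - z‖^2) by rw [Real.sqrt_sq (norm_nonneg _)]]
    exact Real.sqrt_le_sqrt (by nlinarith [Real.sq_sqrt (sq_nonneg ‖y - z‖)])
  have hψz : ψ z = K * η := by
    simp only [hψ_def, sub_self, norm_zero]
    rw [show (0:ℝ)^2 + η^2 = η^2 by ring, Real.sqrt_sq hη.le]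
  have hψnn : ∀ y, 0 ≤ ψ y := fun y => mul_nonneg hK.le (Real.sqrt_nonneg _)
  set ρ : ℝ := 2*C₀/(lam*K) + η + 1 with hρ_def
  have hρ0 : 0 ≤ ρ := by positivity
  obtain ⟨yh, hyhmem, hyhmax⟩ := (isCompact_closedBall z ρ).exists_isMaxOn
    ⟨z, by simp [hρ0]⟩ ((hv.1.sub hψcd.continuous).continuousOn)
  have hglobal : ∀ y, u y - ψ y ≤ u yh - ψ yh := by
    intro y
    by_cases hyB : y ∈ Metric.closedBall z ρ
    · exact hyhmax hyB
    · have hz : z ∈ Metric.closedBall z ρ := by simp [hρ0]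
      have hout : ρ < ‖y - z‖ := by
        simpa [Metric.mem_closedBall, dist_eq_norm] using hyB
      have h1 : u y - u z ≤ 2*C₀/lam := hosc y z
      have h2 : K * ρ < K * ‖y - z‖ := by
        exact mul_lt_mul_of_pos_left hout hK
      have h3 : K * ρ = 2*C₀/lam + K*η + K := by
        rw [hρ_def]
        field_simp
      have h4 := hψlb y
      have e0 : u y - ψ y ≤ u y - K * ‖y - z‖ := by linarith
      have e1 : u y - K * ‖y - z‖ < u y - K * ρ := by linarith
      have e2 : u y - K * ρ ≤ u z - K*η - K := by
        rw [h3]; linarith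
      have h5 : u y - ψ y < u z - ψ z := by
        rw [hψz]; linarith
      exact le_trans h5.le (hyhmax hz)
  have hloc : IsLocalMax (fun y => u y - ψ y) yh := Filter.Eventually.of_forall hglobal
  have htest := (hv.2.2 ψ hψcd).1 yh hloc
  have hHle : H (yh, gradient ψ yh) ≤ C₀ := by
    have := (hbdd yh).1
    linarith
  have hgrad : gradient ψ yh
      = (K / Real.sqrt (‖yh - z‖^2 + η^2)) • (yh - z) :=
    (sqrt_quad_hasGradientAt K η hη z yh).gradient
  have hsmall : ‖yh - z‖ < η := by
    by_contra hbig
    push_neg at hbig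
    set t : ℝ := ‖yh - z‖ with ht_def
    have ht : 0 < t := lt_of_lt_of_le hη hbig
    have hsq : Real.sqrt (t^2 + η^2) ≤ 2*t := by
      rw [show 2*t = Real.sqrt ((2*t)^2) by rw [Real.sqrt_sq (by linarith)]]
      apply Real.sqrt_le_sqrt
      nlinarith
    have hsqpos : 0 < Real.sqrt (t^2 + η^2) := Real.sqrt_pos.2 (by positivity)
    have hnorm : ‖gradient ψ yh‖ = (K / Real.sqrt (t^2 + η^2)) * t := by
      rw [hgrad, norm_smul, Real.norm_eq_abs, abs_of_pos (by positivity)]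
    have hge : K/2 ≤ ‖gradient ψ yh‖ := by
      rw [hnorm]
      rw [div_mul_eq_mul_div, le_div_iff₀ hsqpos]
      nlinarith
    exact absurd (hKprop yh _ hge) (not_lt.2 hHle)
  -- conclusion
  have huyh : u yh < u z + ε/2 := by
    have hd : dist yh z < δ := by
      rw [dist_eq_norm]
      have : η ≤ δ/2 := min_le_left _ _
      linarith
    have := hcl hd
    rw [Real.dist_eq] at this
    have := abs_lt.1 this
    linarith [this.1, this.2]
  have hψx : ψ x ≤ K * ‖x - z‖ + K * η := by
    rw [hψ_def]
    have h1 : Real.sqrt (‖x - z‖^2 + η^2) ≤ ‖x - z‖ + η := by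
      rw [show ‖x - z‖ + η = Real.sqrt ((‖x - z‖ + η)^2) by
        rw [Real.sqrt_sq (by positivity)]]
      apply Real.sqrt_le_sqrt
      nlinarith [norm_nonneg (x - z), hη.le]
    calc K * Real.sqrt (‖x - z‖^2 + η^2) ≤ K * (‖x - z‖ + η) :=
          mul_le_mul_of_nonneg_left h1 hK.le
      _ = K * ‖x - z‖ + K * η := by ring
  have hKη : K * η ≤ ε/2 := by
    have : η ≤ ε/(2*K) := min_le_right _ _
    rw [le_div_iff₀ (by positivity)] at this
    linarith
  have hfin := hglobal x
  have hlast : u x < u z + ε/2 + K * ‖x - z‖ + ε/2 := by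
    have := hψnn yh
    linarith
  rw [hε_def] at hlast
  linarith

end VDSE


set_option maxHeartbeats 1000000 in
theorem viscous_discount_sqrt_estimate
    (n : ℕ) (hn : 1 ≤ n) (H : Em n × Em n → ℝ) (hH : Tonelli H) :
    ∃ C₄ : ℝ, 0 < C₄ ∧ ∀ lam eps : ℝ, lam ∈ Set.Ioc (0:ℝ) 1 → eps ∈ Set.Ioc (0:ℝ) 1 →
      ∀ uve ulam : Em n → ℝ, ClassicalSol H lam eps uve → ViscositySol H lam ulam →
        ∀ x : Em n, |uve x - ulam x| ≤ C₄ * Real.sqrt eps / lam := by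
  obtain ⟨C₀, hC₀0, hC₀⟩ := VDSE.exists_C0 hH
  obtain ⟨K, hK, hKprop⟩ := VDSE.exists_K hH hC₀0
  obtain ⟨M, hM0, hM⟩ := VDSE.exists_M hH hK
  have hMK : 0 ≤ 2*M*K := by positivity
  refine ⟨(n : ℝ) + 2*M*K + 1, by positivity, ?_⟩
  intro lam eps hlamI hepsI uve ulam hcs hvs x
  obtain ⟨hlam, hlam1⟩ := hlamI
  obtain ⟨heps, heps1⟩ := hepsI
  set δ : ℝ := Real.sqrt eps with hδ_def
  have hδ : 0 < δ := Real.sqrt_pos.2 heps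
  have hδδ : δ * δ = eps := Real.mul_self_sqrt heps.le
  set c : ℝ := 1/(2*δ) with hc_def
  have hc : 0 < c := by positivity
  -- helper: from c t² ≤ K t deduce t ≤ 2 K δ
  have hcK : c * (2*K*δ) = K := by
    rw [hc_def]; field_simp
  have htb : ∀ t : ℝ, 0 ≤ t → c * t^2 ≤ K * t → t ≤ 2*K*δ := by
    intro t ht h
    by_contra hgt
    push_neg at hgt
    have ht0 : 0 < t := lt_trans (by positivity) hgt
    have h1 : K < c * t := by
      rw [← hcK]; exact mul_lt_mul_of_pos_left hgt hc
    have h2 : K * t < c * t * t := mul_lt_mul_of_pos_right h1 ht0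
    nlinarith
  have hlapconst : eps * (2*c*(n:ℝ)) = (n:ℝ) * δ := by
    rw [hc_def]
    field_simp
    rw [← hδδ]
    ring
  have h2cδ : (2*c) * (2*K*δ) = 2*K := by
    rw [hc_def]; field_simp
  have hlip := VDSE.visc_lipschitz hlam hC₀0 hC₀ hK hKprop hvs
  obtain ⟨hsm, hperu, heqn⟩ := hcs
  obtain ⟨hvcont, hvper, hvtest⟩ := hvs
  have hvs' : ViscositySol H lam ulam := ⟨hvcont, hvper, hvtest⟩
  have hudiff : Differentiable ℝ uve := hsm.differentiable two_ne_zero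
  -- the common quantity
  have bound1 : ∀ y : Em n, uve y - ulam y ≤ ((n:ℝ)*δ + 2*M*K*δ)/lam := by
    obtain ⟨x1, y1, hmax1⟩ := VDSE.doubling hsm.continuous hperu hvcont hvper hc
    -- distance bound
    have ht1' : c * ‖x1 - y1‖^2 ≤ K * ‖x1 - y1‖ := by
      have h := hmax1 x1 x1
      simp only [sub_self, norm_zero] at h
      norm_num at h
      have := hlip x1 y1
      linarith
    have ht1 : ‖x1 - y1‖ ≤ 2*K*δ := htb _ (norm_nonneg _) ht1'
    set p1 : Em n := (2*c) • (x1 - y1) with hp1_def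
    have hp1 : ‖p1‖ ≤ 2*K := by
      rw [hp1_def, norm_smul, Real.norm_eq_abs, abs_of_pos (by positivity)]
      calc (2*c) * ‖x1 - y1‖ ≤ (2*c) * (2*K*δ) :=
            mul_le_mul_of_nonneg_left ht1 (by positivity)
        _ = 2*K := h2cδ
    -- viscosity supersolution test
    have hmin1 : IsLocalMin (fun y => ulam y - (fun y => (-c) * ‖y - x1‖^2) y) y1 := by
      apply Filter.Eventually.of_forall
      intro y
      have h := hmax1 x1 y
      have hn1 : ‖x1 - y‖ = ‖y - x1‖ := norm_sub_rev _ _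
      have hn2 : ‖x1 - y1‖ = ‖y1 - x1‖ := norm_sub_rev _ _
      rw [hn1, hn2] at h
      simp only
      linarith
    have hgφ : gradient (fun y => (-c) * ‖y - x1‖^2) y1 = p1 := by
      rw [VDSE.quad_gradient]
      rw [hp1_def]
      have he : (2*(-c)) = -(2*c) := by ring
      rw [he, neg_smul, ← smul_neg, neg_sub]
    have hvis1 := (hvtest (fun y => (-c) * ‖y - x1‖^2)
      ((VDSE.quad_contDiff (-c) x1).of_le one_le_two)).2 y1 hmin1
    rw [hgφ] at hvis1
    -- classical side
    have hmaxc : IsLocalMax (fun xx => uve xx - (fun xx => c * ‖xx - y1‖^2) xx) x1 := by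
      apply Filter.Eventually.of_forall
      intro xx
      have h := hmax1 xx y1
      simp only
      linarith
    have hgeq : gradient uve x1 = p1 := by
      have h := VDSE.gradient_eq_of_isLocalMax (hudiff x1)
        (((VDSE.quad_contDiff c y1).differentiable two_ne_zero) x1) hmaxc
      rw [h, VDSE.quad_gradient, hp1_def]
    have hlap1 : lap uve x1 ≤ 2*c*(n:ℝ) := by
      have h := VDSE.lap_le_of_isLocalMax hsm (VDSE.quad_contDiff c y1) hmaxc
      rwa [VDSE.quad_lap] at h
    have heq1 := heqn x1
    rw [hgeq] at heq1
    have hHd1 : |H (y1, p1) - H (x1, p1)| ≤ M * ‖y1 - x1‖ := hM y1 x1 p1 hp1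
    have hHd1' : H (y1, p1) - H (x1, p1) ≤ M * (2*K*δ) := by
      have h1 := (abs_le.1 hHd1).2
      have h2 : ‖y1 - x1‖ ≤ 2*K*δ := by rwa [norm_sub_rev]
      have h3 : M * ‖y1 - x1‖ ≤ M * (2*K*δ) := mul_le_mul_of_nonneg_left h2 hM0
      linarith
    have hlapbd : eps * lap uve x1 ≤ (n:ℝ) * δ := by
      calc eps * lap uve x1 ≤ eps * (2*c*(n:ℝ)) := mul_le_mul_of_nonneg_left hlap1 heps.le
        _ = (n:ℝ) * δ := hlapconst
    -- combine
    have hcomb : lam * (uve x1 - ulam y1) ≤ (n:ℝ)*δ + 2*M*K*δ := by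
      have e1 : lam * uve x1 ≤ (n:ℝ)*δ - H (x1, p1) := by linarith
      have e2 : -(lam * ulam y1) ≤ H (y1, p1) := by linarith
      have e3 : lam * (uve x1 - ulam y1) = lam * uve x1 + (-(lam * ulam y1)) := by ring
      rw [e3]
      linarith [hHd1']
    intro y
    have h0 := hmax1 y y
    simp only [sub_self, norm_zero] at h0
    norm_num at h0
    have h1 : uve y - ulam y ≤ uve x1 - ulam y1 := by
      have hpos : 0 ≤ c * ‖x1 - y1‖^2 := by positivity
      linarith
    rw [le_div_iff₀ hlam]
    have h2 := mul_le_mul_of_nonneg_right h1 hlam.le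
    have h3 : (uve x1 - ulam y1) * lam = lam * (uve x1 - ulam y1) := mul_comm _ _
    linarith
  have bound2 : ∀ y : Em n, ulam y - uve y ≤ ((n:ℝ)*δ + 2*M*K*δ)/lam := by
    obtain ⟨x1, y1, hmax1⟩ := VDSE.doubling hvcont hvper hsm.continuous hperu hc
    have ht1' : c * ‖x1 - y1‖^2 ≤ K * ‖x1 - y1‖ := by
      have h := hmax1 y1 y1
      simp only [sub_self, norm_zero] at h
      norm_num at h
      have := hlip x1 y1
      linarith
    have ht1 : ‖x1 - y1‖ ≤ 2*K*δ := htb _ (norm_nonneg _) ht1'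
    set p1 : Em n := (2*c) • (x1 - y1) with hp1_def
    have hp1 : ‖p1‖ ≤ 2*K := by
      rw [hp1_def, norm_smul, Real.norm_eq_abs, abs_of_pos (by positivity)]
      calc (2*c) * ‖x1 - y1‖ ≤ (2*c) * (2*K*δ) :=
            mul_le_mul_of_nonneg_left ht1 (by positivity)
        _ = 2*K := h2cδ
    -- viscosity subsolution test at x1
    have hmaxv : IsLocalMax (fun xx => ulam xx - (fun xx => c * ‖xx - y1‖^2) xx) x1 := by
      apply Filter.Eventually.of_forall
      intro xx
      have h := hmax1 xx y1
      simp only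
      linarith
    have hgφ : gradient (fun xx => c * ‖xx - y1‖^2) x1 = p1 := by
      rw [VDSE.quad_gradient, hp1_def]
    have hvis1 := (hvtest (fun xx => c * ‖xx - y1‖^2)
      ((VDSE.quad_contDiff c y1).of_le one_le_two)).1 x1 hmaxv
    rw [hgφ] at hvis1
    -- classical side: minimum at y1
    have hminc : IsLocalMin (fun y => uve y - (fun y => (-c) * ‖y - x1‖^2) y) y1 := by
      apply Filter.Eventually.of_forall
      intro y
      have h := hmax1 x1 y
      have hn1 : ‖x1 - y‖ = ‖y - x1‖ := norm_sub_rev _ _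
      have hn2 : ‖x1 - y1‖ = ‖y1 - x1‖ := norm_sub_rev _ _
      rw [hn1, hn2] at h
      simp only
      linarith
    have hgeq : gradient uve y1 = p1 := by
      have h := VDSE.gradient_eq_of_isLocalMin (hudiff y1)
        (((VDSE.quad_contDiff (-c) x1).differentiable two_ne_zero) y1) hminc
      rw [h, VDSE.quad_gradient, hp1_def]
      have he : (2*(-c)) = -(2*c) := by ring
      rw [he, neg_smul, ← smul_neg, neg_sub]
    have hlap1 : -(2*c*(n:ℝ)) ≤ lap uve y1 := by
      have h := VDSE.lap_ge_of_isLocalMin hsm (VDSE.quad_contDiff (-c) x1) hminc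
      rw [VDSE.quad_lap] at h
      calc -(2*c*(n:ℝ)) = 2*(-c)*(n:ℝ) := by ring
        _ ≤ lap uve y1 := h
    have heq1 := heqn y1
    rw [hgeq] at heq1
    have hHd1 : |H (y1, p1) - H (x1, p1)| ≤ M * ‖y1 - x1‖ := hM y1 x1 p1 hp1
    have hHd1' : H (y1, p1) - H (x1, p1) ≤ M * (2*K*δ) := by
      have h1 := (abs_le.1 hHd1).2
      have h2 : ‖y1 - x1‖ ≤ 2*K*δ := by rwa [norm_sub_rev]
      have h3 : M * ‖y1 - x1‖ ≤ M * (2*K*δ) := mul_le_mul_of_nonneg_left h2 hM0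
      linarith
    have hlapbd : -((n:ℝ) * δ) ≤ eps * lap uve y1 := by
      have h1 : eps * (-(2*c*(n:ℝ))) ≤ eps * lap uve y1 :=
        mul_le_mul_of_nonneg_left hlap1 heps.le
      have h2 : eps * (-(2*c*(n:ℝ))) = -((n:ℝ)*δ) := by
        rw [← hlapconst]; ring
      linarith
    have hcomb : lam * (ulam x1 - uve y1) ≤ (n:ℝ)*δ + 2*M*K*δ := by
      have e1 : lam * ulam x1 ≤ -H (x1, p1) := by linarith
      have e2 : -(lam * uve y1) ≤ (n:ℝ)*δ + H (y1, p1) := by linarith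
      have e3 : lam * (ulam x1 - uve y1) = lam * ulam x1 + (-(lam * uve y1)) := by ring
      rw [e3]
      linarith [hHd1']
    intro y
    have h0 := hmax1 y y
    simp only [sub_self, norm_zero] at h0
    norm_num at h0
    have h1 : ulam y - uve y ≤ ulam x1 - uve y1 := by
      have hpos : 0 ≤ c * ‖x1 - y1‖^2 := by positivity
      linarith
    rw [le_div_iff₀ hlam]
    have h2 := mul_le_mul_of_nonneg_right h1 hlam.le
    have h3 : (uve x1 - ulam y1) * lam = lam * (uve x1 - ulam y1) := mul_comm _ _
    linarith
  -- final comparison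
  have hnum : ((n:ℝ)*δ + 2*M*K*δ)/lam ≤ ((n:ℝ) + 2*M*K + 1) * δ / lam := by
    gcongr
    linarith [hδ.le]
  rw [abs_le]
  constructor
  · have := bound2 x
    have h2 := le_trans this hnum
    linarith
  · have := bound1 x
    have h2 := le_trans this hnum
    linarith

end
end

section
/- Let n ≥ 1 and let H : ℝⁿ × ℝⁿ → ℝ be a Tonelli Hamiltonian. For each λ ∈ (0,1] let u_λ be a ℤⁿ-periodic continuous viscosity solution of λu_λ + H(x, Du_λ) = 0, and for each λ, ε ∈ (0,1] let u_λ^ε be a classical solution of the viscous discounted equation λu_λ^ε + H(x, Du_λ^ε) = εΔu_λ^ε. Suppose there is a continuous ℤⁿ-periodic function u₀ with sup_x |u_λ(x) − u₀(x)| → 0 as λ → 0⁺, and let ε : (0,1] → (0,1] satisfy ε(λ)/λ² → 0 as λ → 0⁺. Then sup_x |u_λ^{ε(λ)}(x) − u₀(x)| → 0 as λ → 0⁺. -/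
open MeasureTheory Real Filter
open scoped RealInnerProductSpace

noncomputable section

noncomputable section

variable {E : Type*} [NormedAddCommGroup E] [NormedSpace ℝ E]

lemma line_hasDerivAt {f : E → ℝ} (hf : Differentiable ℝ f) (x v : E) (t : ℝ) :
    HasDerivAt (fun s : ℝ => f (x + s • v)) (fderiv ℝ f (x + t • v) v) t := by
  have hc : HasDerivAt (fun s : ℝ => x + s • v) v t := by
    simpa using ((hasDerivAt_id t).smul_const v).const_add x
  exact ((hf (x + t • v)).hasFDerivAt.comp_hasDerivAt t hc)

lemma line_hasDerivAt_fderiv {f : E → ℝ} (hf : ContDiff ℝ 2 f) (x v : E) :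
    HasDerivAt (fun s : ℝ => fderiv ℝ f (x + s • v) v)
      (iteratedFDeriv ℝ 2 f x ![v, v]) 0 := by
  have hc : HasDerivAt (fun s : ℝ => x + s • v) v 0 := by
    simpa using ((hasDerivAt_id (0:ℝ)).smul_const v).const_add x
  have hdf : ContDiff ℝ 1 (fderiv ℝ f) := hf.fderiv_right (by norm_num)
  have h1 : HasFDerivAt (fderiv ℝ f) (fderiv ℝ (fderiv ℝ f) (x + (0:ℝ) • v))
      (x + (0:ℝ) • v) := (hdf.differentiable one_ne_zero (x + (0:ℝ) • v)).hasFDerivAt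
  have h2 : HasDerivAt (fun s : ℝ => fderiv ℝ f (x + s • v))
      (fderiv ℝ (fderiv ℝ f) x v) 0 := by
    have := h1.comp_hasDerivAt 0 hc
    rw [zero_smul, add_zero] at this
    exact this
  have h3 : HasDerivAt (fun s : ℝ => fderiv ℝ f (x + s • v) v)
      (fderiv ℝ (fderiv ℝ f) x v v) 0 := by
    have := (ContinuousLinearMap.apply ℝ ℝ v).hasFDerivAt.comp_hasDerivAt 0 h2
    exact this
  rw [iteratedFDeriv_two_apply]
  simpa using h3

/-- 1D second derivative test at a local max. -/
lemma second_deriv_nonpos_of_isLocalMax {g g' : ℝ → ℝ} {D : ℝ}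
    (hd : ∀ t, HasDerivAt g (g' t) t) (hD : HasDerivAt g' D 0)
    (hmax : IsLocalMax g 0) : D ≤ 0 := by
  by_contra hpos
  push_neg at hpos
  have hg'0 : g' 0 = 0 := by
    have := hmax.deriv_eq_zero
    rwa [(hd 0).deriv] at this
  have hslope : Tendsto (fun t => g' t / t) (nhdsWithin 0 {(0:ℝ)}ᶜ) (nhds D) := by
    have h := hasDerivAt_iff_tendsto_slope.1 hD
    have : slope g' 0 = fun t => g' t / t := by
      funext t; rw [slope_def_field, hg'0, sub_zero, sub_zero]
    rwa [this] at h
  have hev : ∀ᶠ t in nhdsWithin 0 {(0:ℝ)}ᶜ, 0 < g' t / t :=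
    hslope.eventually (eventually_gt_nhds hpos)
  rw [eventually_nhdsWithin_iff, Metric.eventually_nhds_iff] at hev
  obtain ⟨δ, hδ, hδ'⟩ := hev
  have hgc : Continuous g := Differentiable.continuous (fun t => (hd t).differentiableAt)
  have hgmono : StrictMonoOn g (Set.Icc 0 (δ/2)) := by
    apply strictMonoOn_of_deriv_pos (convex_Icc _ _) hgc.continuousOn
    intro t ht
    rw [interior_Icc, Set.mem_Ioo] at ht
    rw [(hd t).deriv]
    have h2 : dist t 0 < δ := by
      rw [Real.dist_eq, sub_zero, abs_of_pos ht.1]; linarith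
    have h3 := hδ' h2 (by simp [ne_of_gt ht.1])
    have h4 := mul_pos h3 ht.1
    rwa [div_mul_cancel₀] at h4
    exact ne_of_gt ht.1
  obtain ⟨η, hη, hηP⟩ := Metric.eventually_nhds_iff.1 hmax
  set t := min (δ/2) (η/2) with ht
  have htpos : 0 < t := lt_min (by linarith) (by linarith)
  have hlt : g 0 < g t := hgmono (Set.left_mem_Icc.2 (by linarith))
    ⟨le_of_lt htpos, min_le_left _ _⟩ htpos
  have hle : g t ≤ g 0 := hηP (by
    rw [Real.dist_eq, sub_zero, abs_of_pos htpos]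
    calc t ≤ η/2 := min_le_right _ _
    _ < η := by linarith)
  linarith

end

noncomputable section
variable {E : Type*} [NormedAddCommGroup E] [InnerProductSpace ℝ E]

/-- Second derivative test, vector version, local max. -/
lemma iFD2_nonpos_of_isLocalMax {f : E → ℝ} (hf : ContDiff ℝ 2 f) {x : E}
    (hmax : IsLocalMax f x) (v : E) : iteratedFDeriv ℝ 2 f x ![v, v] ≤ 0 := by
  have hdif : Differentiable ℝ f := hf.differentiable two_ne_zero
  have hmax' : IsLocalMax (fun s : ℝ => f (x + s • v)) 0 := by
    have hc : ContinuousAt (fun s : ℝ => x + s • v) 0 := by fun_prop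
    exact IsLocalMax.comp_continuous (g := fun s : ℝ => x + s • v) (b := 0)
      (by simpa using hmax) hc
  exact second_deriv_nonpos_of_isLocalMax
    (fun t => line_hasDerivAt hdif x v t) (line_hasDerivAt_fderiv hf x v) hmax'

/-- Second derivative test, vector version, local min. -/
lemma iFD2_nonneg_of_isLocalMin {f : E → ℝ} (hf : ContDiff ℝ 2 f) {x : E}
    (hmin : IsLocalMin f x) (v : E) : 0 ≤ iteratedFDeriv ℝ 2 f x ![v, v] := by
  have := iFD2_nonpos_of_isLocalMax (f := -f) hf.neg hmin.neg v
  rw [iteratedFDeriv_neg_apply] at this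
  simpa using this

lemma contDiff_quad (a : ℝ) (c : E) (m : ℕ∞) : ContDiff ℝ m (fun z : E => a * ‖z - c‖^2) :=
  contDiff_const.mul ((contDiff_id.sub contDiff_const).norm_sq ℝ)

lemma hasFDerivAt_quad (a : ℝ) (c y : E) :
    HasFDerivAt (fun z : E => a * ‖z - c‖^2)
      ((2*a) • (innerSL ℝ (y - c))) y := by
  have h1 : HasFDerivAt (fun z : E => z - c) (ContinuousLinearMap.id ℝ E) y :=
    (hasFDerivAt_id y).sub_const c
  have h2 := h1.norm_sq
  have h3 := h2.const_mul a
  refine h3.congr_fderiv ?_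
  ext w
  simp [real_inner_smul_left, two_smul]
  ring

lemma hasGradientAt_quad (a : ℝ) (c y : E) [CompleteSpace E] :
    HasGradientAt (fun z : E => a * ‖z - c‖^2) ((2*a) • (y - c)) y := by
  rw [hasGradientAt_iff_hasFDerivAt]
  refine (hasFDerivAt_quad a c y).congr_fderiv ?_
  ext w
  simp [InnerProductSpace.toDual_apply_apply, real_inner_smul_left]

/-- second derivative of the quadratic along a line. -/
lemma iFD2_quad (a : ℝ) (c x v : E) :
    iteratedFDeriv ℝ 2 (fun z : E => a * ‖z - c‖^2) x ![v, v] = 2*a*‖v‖^2 := by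
  have h1 := line_hasDerivAt_fderiv (contDiff_quad a c 2) x v
  have heq : (fun s : ℝ => fderiv ℝ (fun z : E => a * ‖z - c‖^2) (x + s • v) v)
      = fun s : ℝ => (2*a) * (⟪x - c, v⟫ + s * ⟪v, v⟫) := by
    funext s
    rw [(hasFDerivAt_quad a c (x + s • v)).fderiv]
    rw [show x + s • v - c = (x - c) + s • v by abel]
    simp only [ContinuousLinearMap.smul_apply, innerSL_apply_apply, smul_eq_mul,
      inner_add_left, real_inner_smul_left]
  rw [heq] at h1
  have h2 : HasDerivAt (fun s : ℝ => (2*a) * (⟪x - c, v⟫ + s * ⟪v, v⟫))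
      ((2*a) * ⟪v, v⟫) 0 := by
    simpa using (((hasDerivAt_mul_const (⟪v, v⟫:ℝ)).const_add
      (⟪x - c, v⟫:ℝ)).const_mul (2*a))
  have := h1.unique h2
  rw [this, real_inner_self_eq_norm_sq]
end

section Helpers3
variable {n : ℕ}

lemma exists_intVec_norm_le (n : ℕ) (y : Em n) : ∃ k : Fin n → ℤ, ‖y + intVec k‖ ≤ n := by
  refine ⟨fun i => -⌊y i⌋, ?_⟩
  have hcoord : ∀ i, ((y + intVec (fun i => -⌊y i⌋)) i) = Int.fract (y i) := by
    intro i
    have : (y + intVec (fun i => -⌊y i⌋)) i = y i + ((-⌊y i⌋ : ℤ) : ℝ) := by simp [intVec]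
    rw [this]
    push_cast
    rw [Int.fract]
    ring
  rw [EuclideanSpace.norm_eq]
  have hsum : (∑ i, ‖(y + intVec (fun i => -⌊y i⌋)) i‖^2) ≤ (n:ℝ) := by
    calc (∑ i, ‖(y + intVec (fun i => -⌊y i⌋)) i‖^2) ≤ ∑ _i : Fin n, (1:ℝ) := by
          apply Finset.sum_le_sum
          intro i _
          rw [hcoord i]
          have h1 : 0 ≤ Int.fract (y i) := Int.fract_nonneg _
          have h2 : Int.fract (y i) < 1 := Int.fract_lt_one _
          rw [Real.norm_eq_abs, abs_of_nonneg h1]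
          nlinarith
      _ = (n:ℝ) := by simp
  have hn2 : (n:ℝ) ≤ (n:ℝ)^2 := by
    have : (n:ℕ) ≤ n^2 := Nat.le_self_pow two_ne_zero n
    exact_mod_cast this
  calc Real.sqrt (∑ i, ‖(y + intVec (fun i => -⌊y i⌋)) i‖^2)
      ≤ Real.sqrt ((n:ℝ)^2) := Real.sqrt_le_sqrt (le_trans hsum hn2)
    _ = (n:ℝ) := Real.sqrt_sq (by positivity)

lemma periodic_exists_max {v : Em n → ℝ} (hc : Continuous v) (hp : ZPeriodic v) :
    ∃ x : Em n, ‖x‖ ≤ n ∧ ∀ y, v y ≤ v x := by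
  obtain ⟨x, hx, hmax⟩ := (isCompact_closedBall (0 : Em n) n).exists_isMaxOn
    ⟨0, Metric.mem_closedBall_self (by positivity)⟩ hc.continuousOn
  refine ⟨x, by simpa using hx, fun y => ?_⟩
  obtain ⟨k, hk⟩ := exists_intVec_norm_le n y
  have : v y = v (y + intVec k) := (hp y k).symm
  rw [this]
  exact hmax (by simpa [Metric.mem_closedBall, dist_zero_right] using hk)

lemma periodic_exists_min {v : Em n → ℝ} (hc : Continuous v) (hp : ZPeriodic v) :
    ∃ x : Em n, ∀ y, v x ≤ v y := by
  obtain ⟨x, _, hmax⟩ := periodic_exists_max (v := fun y => -(v y)) hc.neg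
    (fun y k => by simp [hp y k])
  exact ⟨x, fun y => by have := hmax y; simpa using this⟩

lemma HasGradientAt.neg'' {g : Em n → ℝ} {w x : Em n} (h : HasGradientAt g w x) :
    HasGradientAt (fun y => -(g y)) (-w) x := by
  rw [hasGradientAt_iff_hasFDerivAt] at h ⊢
  rw [map_neg]
  exact h.neg

/-- At a local max of U - a‖·-c‖², the gradient and second derivatives of U are pinned. -/
lemma constrained_max_gradient {U : Em n → ℝ} (hU : ContDiff ℝ 2 U) {a : ℝ} {c xb : Em n}
    (hmax : IsLocalMax (fun x => U x - a * ‖x - c‖^2) xb) :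
    gradient U xb = (2*a) • (xb - c) ∧
      ∀ v : Em n, iteratedFDeriv ℝ 2 U xb ![v, v] ≤ 2*a*‖v‖^2 := by
  have hq := contDiff_quad (E := Em n) a c 2
  have hW2 : ContDiff ℝ 2 (fun x => U x - a * ‖x - c‖^2) := hU.sub hq
  have hWd : Differentiable ℝ (fun x => U x - a * ‖x - c‖^2) := hW2.differentiable two_ne_zero
  constructor
  · have h0 : fderiv ℝ (fun x => U x - a * ‖x - c‖^2) xb = 0 := hmax.fderiv_eq_zero
    have hW : HasFDerivAt (fun x => U x - a * ‖x - c‖^2) (0 : Em n →L[ℝ] ℝ) xb := by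
      rw [← h0]; exact (hWd xb).hasFDerivAt
    have hq' : HasFDerivAt (fun x : Em n => a * ‖x - c‖^2) ((2*a) • (innerSL ℝ (xb - c))) xb :=
      hasFDerivAt_quad a c xb
    have hU' : HasFDerivAt U ((2*a) • (innerSL ℝ (xb - c))) xb := by
      have := hW.add hq'
      simpa [Pi.add_def] using this
    have hg : HasGradientAt U ((2*a) • (xb - c)) xb := by
      rw [hasGradientAt_iff_hasFDerivAt]
      refine hU'.congr_fderiv ?_
      ext w
      simp [InnerProductSpace.toDual_apply_apply, real_inner_smul_left]
    exact hg.gradient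
  · intro v
    have h1 : iteratedFDeriv ℝ 2 (fun x => U x - a * ‖x - c‖^2) xb ![v, v] ≤ 0 :=
      iFD2_nonpos_of_isLocalMax hW2 hmax v
    have hadd := iteratedFDeriv_add_apply' (i := 2) (x := xb)
      (f := fun x => U x - a * ‖x - c‖^2) (g := fun x : Em n => a * ‖x - c‖^2) hW2.contDiffAt hq.contDiffAt
    have hfun : (fun x => (U x - a * ‖x - c‖^2) + a * ‖x - c‖^2) = U := by
      funext z; ring
    rw [hfun] at hadd
    have hqv := iFD2_quad a c xb v
    have : iteratedFDeriv ℝ 2 U xb ![v, v]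
        = iteratedFDeriv ℝ 2 (fun x => U x - a * ‖x - c‖^2) xb ![v, v]
          + iteratedFDeriv ℝ 2 (fun x : Em n => a * ‖x - c‖^2) xb ![v, v] := by
      rw [hadd]; rfl
    rw [this, hqv]
    linarith

/-- At a local min of U + a‖·-c‖², dual statement. -/
lemma constrained_min_gradient {U : Em n → ℝ} (hU : ContDiff ℝ 2 U) {a : ℝ} {c xb : Em n}
    (hmin : IsLocalMin (fun x => U x + a * ‖x - c‖^2) xb) :
    gradient U xb = (2*a) • (c - xb) ∧
      ∀ v : Em n, -(2*a*‖v‖^2) ≤ iteratedFDeriv ℝ 2 U xb ![v, v] := by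
  have hmax : IsLocalMax (fun x => (fun y => -(U y)) x - a * ‖x - c‖^2) xb := by
    have := hmin.neg
    apply this.congr
    filter_upwards with z
    ring
  obtain ⟨hg, hs⟩ := constrained_max_gradient hU.neg hmax
  constructor
  · have hG : HasGradientAt (fun y => -(U y)) ((2*a) • (xb - c)) xb := by
      rw [← hg]
      exact DifferentiableAt.hasGradientAt ((hU.neg.differentiable two_ne_zero) xb)
    have hG2 := hG.neg''
    have hfun : (fun y => -(-(U y))) = U := by funext z; ring
    rw [hfun] at hG2
    rw [hG2.gradient]
    module
  · intro v
    have := hs v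
    have hneg : iteratedFDeriv ℝ 2 (fun y => -(U y)) xb ![v, v]
        = - iteratedFDeriv ℝ 2 U xb ![v, v] := by
      have : (fun y => -(U y)) = -U := rfl
      rw [this, iteratedFDeriv_neg_apply]
      rfl
    rw [hneg] at this
    linarith

lemma lap_le_of_iFD2 {U : Em n → ℝ} {xb : Em n} {b : ℝ}
    (h : ∀ v : Em n, iteratedFDeriv ℝ 2 U xb ![v, v] ≤ b * ‖v‖^2) :
    lap U xb ≤ n * b := by
  rw [lap]
  calc (∑ i, iteratedFDeriv ℝ 2 U xb ![EuclideanSpace.single i 1, EuclideanSpace.single i 1])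
      ≤ ∑ _i : Fin n, b := by
        apply Finset.sum_le_sum
        intro i _
        have := h (EuclideanSpace.single i (1:ℝ))
        rwa [EuclideanSpace.norm_single, norm_one, one_pow, mul_one] at this
    _ = n * b := by simp [mul_comm]

lemma lap_ge_of_iFD2 {U : Em n → ℝ} {xb : Em n} {b : ℝ}
    (h : ∀ v : Em n, -(b * ‖v‖^2) ≤ iteratedFDeriv ℝ 2 U xb ![v, v]) :
    -(n * b) ≤ lap U xb := by
  rw [lap]
  calc -((n:ℝ) * b) = ∑ _i : Fin n, -b := by simp [mul_comm]
    _ ≤ ∑ i, iteratedFDeriv ℝ 2 U xb ![EuclideanSpace.single i 1, EuclideanSpace.single i 1] := by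
        apply Finset.sum_le_sum
        intro i _
        have := h (EuclideanSpace.single i (1:ℝ))
        rwa [EuclideanSpace.norm_single, norm_one, one_pow, mul_one] at this


lemma exists_max_pair {Ψ : Em n × Em n → ℝ} (hc : Continuous Ψ)
    (hper : ∀ (x y : Em n) (k : Fin n → ℤ), Ψ (x + intVec k, y + intVec k) = Ψ (x, y))
    {B : ℝ} (hB : ∀ x y : Em n, Ψ (x, y) ≤ B - ‖x - y‖) :
    ∃ xb yb : Em n, ‖xb‖ ≤ n ∧ ∀ a b : Em n, Ψ (a, b) ≤ Ψ (xb, yb) := by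
  set D := max 0 (B - Ψ (0,0) + 1) with hD
  have hD0 : 0 ≤ D := le_max_left _ _
  set K := (Metric.closedBall (0:Em n) n) ×ˢ (Metric.closedBall (0:Em n) (n + D)) with hK
  have hKcomp : IsCompact K := (isCompact_closedBall _ _).prod (isCompact_closedBall _ _)
  have h00 : ((0,0) : Em n × Em n) ∈ K := by
    constructor <;> simp <;> positivity
  obtain ⟨z, hz, hmax⟩ := hKcomp.exists_isMaxOn ⟨(0,0), h00⟩ hc.continuousOn
  have hz00 : Ψ (0,0) ≤ Ψ z := hmax h00
  refine ⟨z.1, z.2, ?_, ?_⟩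
  · have := hz.1
    simpa using this
  · intro a b
    rcases le_or_gt D ‖a - b‖ with hd | hd
    · have h1 := hB a b
      have h2 : B - Ψ (0,0) + 1 ≤ D := le_max_right _ _
      calc Ψ (a, b) ≤ B - ‖a - b‖ := h1
        _ ≤ B - D := by linarith
        _ ≤ Ψ (0,0) - 1 := by linarith
        _ ≤ Ψ z := by linarith
        _ = Ψ (z.1, z.2) := by rw [Prod.mk.eta]
    · obtain ⟨k, hk⟩ := exists_intVec_norm_le n a
      have hmem : (a + intVec k, b + intVec k) ∈ K := by
        constructor
        · simpa using hk
        · simp only [Set.mem_preimage, Metric.mem_closedBall, dist_zero_right]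
          have : b + intVec k = (a + intVec k) + (b - a) := by abel
          rw [this]
          calc ‖(a + intVec k) + (b - a)‖ ≤ ‖a + intVec k‖ + ‖b - a‖ := norm_add_le _ _
            _ ≤ n + D := by
                rw [norm_sub_rev]
                exact add_le_add hk (le_of_lt hd)
      calc Ψ (a, b) = Ψ (a + intVec k, b + intVec k) := (hper a b k).symm
        _ ≤ Ψ z := hmax hmem
        _ = Ψ (z.1, z.2) := by rw [Prod.mk.eta]

lemma visc_bound {H : Em n × Em n → ℝ} {lam : ℝ} (hl : 0 < lam) {uu : Em n → ℝ}
    (hv : ViscositySol H lam uu) {M : ℝ} (hM : ∀ x : Em n, |H (x, 0)| ≤ M) :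
    ∀ x, |lam * uu x| ≤ M := by
  obtain ⟨hcont, hper, hvp⟩ := hv
  obtain ⟨xM, _, hmax⟩ := periodic_exists_max hcont hper
  obtain ⟨xm, hmin⟩ := periodic_exists_min hcont hper
  have hlmax : IsLocalMax (fun y => uu y - (fun _ : Em n => (0:ℝ)) y) xM :=
    Filter.Eventually.of_forall (fun y => by simpa using hmax y)
  have hlmin : IsLocalMin (fun y => uu y - (fun _ : Em n => (0:ℝ)) y) xm :=
    Filter.Eventually.of_forall (fun y => by simpa using hmin y)
  have h1 := (hvp (fun _ => 0) contDiff_const).1 xM hlmax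
  have h2 := (hvp (fun _ => 0) contDiff_const).2 xm hlmin
  rw [gradient_fun_const] at h1 h2
  intro x
  rw [abs_le]
  constructor
  · have : lam * uu xm ≤ lam * uu x := by
      apply mul_le_mul_of_nonneg_left (hmin x) (le_of_lt hl)
    have hH2 := (abs_le.1 (hM xm)).2
    linarith
  · have : lam * uu x ≤ lam * uu xM := by
      apply mul_le_mul_of_nonneg_left (hmax x) (le_of_lt hl)
    have hH1 := (abs_le.1 (hM xM)).1
    linarith

lemma class_bound {H : Em n × Em n → ℝ} {lam ep : ℝ} (hl : 0 < lam) (he : 0 < ep)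
    {UU : Em n → ℝ} (hcl : ClassicalSol H lam ep UU) {M : ℝ}
    (hM : ∀ x : Em n, |H (x, 0)| ≤ M) : ∀ x, |lam * UU x| ≤ M := by
  obtain ⟨hC2, hper, heq⟩ := hcl
  obtain ⟨xM, _, hmax⟩ := periodic_exists_max (hC2.continuous) hper
  obtain ⟨xm, hmin⟩ := periodic_exists_min (hC2.continuous) hper
  -- max point
  have hlmax : IsLocalMax (fun x => UU x - (0:ℝ) * ‖x - (0:Em n)‖^2) xM :=
    Filter.Eventually.of_forall (fun y => by simpa using hmax y)
  obtain ⟨hg1, hs1⟩ := constrained_max_gradient hC2 hlmax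
  have hlap1 : lap UU xM ≤ 0 := by
    have := lap_le_of_iFD2 (U := UU) (xb := xM) (b := 0) (fun v => by simpa using hs1 v)
    simpa using this
  have hgrad1 : gradient UU xM = 0 := by rw [hg1]; simp
  have heq1 := heq xM
  rw [hgrad1] at heq1
  -- min point
  have hlmin : IsLocalMin (fun x => UU x + (0:ℝ) * ‖x - (0:Em n)‖^2) xm :=
    Filter.Eventually.of_forall (fun y => by simpa using hmin y)
  obtain ⟨hg2, hs2⟩ := constrained_min_gradient hC2 hlmin
  have hlap2 : (0:ℝ) ≤ lap UU xm := by
    have := lap_ge_of_iFD2 (U := UU) (xb := xm) (b := 0) (fun v => by simpa using hs2 v)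
    simpa using this
  have hgrad2 : gradient UU xm = 0 := by rw [hg2]; simp
  have heq2 := heq xm
  rw [hgrad2] at heq2
  intro x
  rw [abs_le]
  have hH1 := (abs_le.1 (hM xM)).1
  have hH2 := (abs_le.1 (hM xm)).2
  constructor
  · have h3 : lam * UU xm ≤ lam * UU x :=
      mul_le_mul_of_nonneg_left (hmin x) (le_of_lt hl)
    have h4 : 0 ≤ ep * lap UU xm := mul_nonneg (le_of_lt he) hlap2
    linarith
  · have h3 : lam * UU x ≤ lam * UU xM :=
      mul_le_mul_of_nonneg_left (hmax x) (le_of_lt hl)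
    have h4 : ep * lap UU xM ≤ 0 := mul_nonpos_of_nonneg_of_nonpos (le_of_lt he) hlap1
    linarith

lemma H_lip {H : Em n × Em n → ℝ} (hsm : ContDiff ℝ 2 H) (R : ℝ) :
    ∃ C, 0 ≤ C ∧ ∀ x y p : Em n, ‖x‖ ≤ R → ‖y‖ ≤ R → ‖p‖ ≤ R →
      |H (y, p) - H (x, p)| ≤ C * ‖y - x‖ := by
  set s := Metric.closedBall (0 : Em n × Em n) R with hs
  have hcont : ContinuousOn (fderiv ℝ H) s :=
    (hsm.continuous_fderiv two_ne_zero).continuousOn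
  obtain ⟨C0, hC0⟩ := (isCompact_closedBall (0 : Em n × Em n) R).exists_bound_of_continuousOn hcont
  refine ⟨max C0 0, le_max_right _ _, ?_⟩
  intro x y p hx hy hp
  have hmem : ∀ z : Em n, ‖z‖ ≤ R → (z, p) ∈ s := by
    intro z hz
    rw [hs, Metric.mem_closedBall, dist_zero_right, Prod.norm_def]
    exact max_le hz hp
  have hdiff : ∀ w ∈ s, DifferentiableAt ℝ H w :=
    fun w _ => (hsm.differentiable two_ne_zero) w
  have hbound : ∀ w ∈ s, ‖fderiv ℝ H w‖ ≤ max C0 0 :=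
    fun w hw => le_trans (hC0 w hw) (le_max_left _ _)
  have := (convex_closedBall (0 : Em n × Em n) R).norm_image_sub_le_of_norm_fderiv_le
    hdiff hbound (hmem x hx) (hmem y hy)
  rw [← Real.norm_eq_abs]
  calc ‖H (y, p) - H (x, p)‖ ≤ max C0 0 * ‖(y, p) - (x, p)‖ := this
    _ = max C0 0 * ‖y - x‖ := by
        congr 1
        rw [Prod.mk_sub_mk, sub_self, Prod.norm_def]
        simp [max_eq_left (norm_nonneg _)]


set_option maxHeartbeats 1000000 in
lemma key_estimate {H : Em n × Em n → ℝ}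
    {lam ep : ℝ} (hl : lam ∈ Set.Ioc (0:ℝ) 1) (he : ep ∈ Set.Ioc (0:ℝ) 1)
    {uu UU : Em n → ℝ} (hv : ViscositySol H lam uu) (hcl : ClassicalSol H lam ep UU)
    {M K C : ℝ} (hM0 : 0 ≤ M) (hM : ∀ x : Em n, |H (x, 0)| ≤ M)
    (hK0 : 0 ≤ K) (hK : ∀ x p : Em n, H (x, p) ≤ n + M → ‖p‖ ≤ K)
    (hC0 : 0 ≤ C)
    (hC : ∀ x y p : Em n, ‖x‖ ≤ n + K → ‖y‖ ≤ n + K → ‖p‖ ≤ n + K →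
      |H (y, p) - H (x, p)| ≤ C * ‖y - x‖) :
    ∀ z : Em n, |UU z - uu z| ≤ (n + C * K) * Real.sqrt ep / lam := by
  obtain ⟨hl0, hl1⟩ := hl
  obtain ⟨he0, he1⟩ := he
  set σ := Real.sqrt ep with hσ
  have hσ0 : 0 < σ := Real.sqrt_pos.2 he0
  have hσ1 : σ ≤ 1 := by
    rw [hσ, show (1:ℝ) = Real.sqrt 1 by simp]
    exact Real.sqrt_le_sqrt he1
  have hσσ : σ * σ = ep := Real.mul_self_sqrt he0.le
  set a := 1/(2*σ) with haa
  have ha0 : 0 < a := by positivity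
  have h2a : 2*a = 1/σ := by rw [haa]; field_simp
  have hepa : ep * (2*a) = σ := by
    rw [h2a]
    field_simp
    linarith [hσσ]
  have hahalf : 1/2 ≤ a := by
    rw [haa]
    rw [div_le_div_iff₀ (by norm_num) (by positivity)]
    linarith
  have hub := visc_bound hl0 hv hM
  have hUb := class_bound hl0 he0 hcl hM
  have huabs : ∀ x, |uu x| ≤ M / lam := by
    intro x
    rw [le_div_iff₀ hl0]
    have h := hub x
    rw [abs_mul, abs_of_pos hl0] at h
    rw [mul_comm]
    linarith
  have hUabs : ∀ x, |UU x| ≤ M / lam := by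
    intro x
    rw [le_div_iff₀ hl0]
    have h := hUb x
    rw [abs_mul, abs_of_pos hl0] at h
    rw [mul_comm]
    linarith
  -- Direction A : sup (UU - uu) estimate
  have dirA : ∀ z : Em n, lam * (UU z - uu z) ≤ (n + C*K) * σ := by
    set Ψ : Em n × Em n → ℝ := fun q => UU q.1 - uu q.2 - a * ‖q.1 - q.2‖^2 with hΨ
    have hcont : Continuous Ψ := by
      apply Continuous.sub
      · exact (hcl.1.continuous.comp continuous_fst).sub (hv.1.comp continuous_snd)
      · exact continuous_const.mul (((continuous_fst.sub continuous_snd).norm).pow 2)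
    have hper : ∀ (x y : Em n) (k : Fin n → ℤ), Ψ (x + intVec k, y + intVec k) = Ψ (x, y) := by
      intro x y k
      have h1 : UU (x + intVec k) = UU x := hcl.2.1 x k
      have h2 : uu (y + intVec k) = uu y := hv.2.1 y k
      have h3 : (x + intVec k) - (y + intVec k) = x - y := by abel
      simp only [hΨ, h1, h2, h3]
    have hval : ∀ x y : Em n, Ψ (x, y) = UU x - uu y - a * ‖x - y‖^2 := fun _ _ => rfl
    have hB : ∀ x y : Em n, Ψ (x, y) ≤ (M/lam + M/lam + 1) - ‖x - y‖ := by
      intro x y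
      have h1 := (abs_le.1 (hUabs x)).2
      have h2 := (abs_le.1 (huabs y)).1
      have hd0 : (0:ℝ) ≤ ‖x - y‖ := norm_nonneg _
      have hsq : ‖x - y‖ - 1 ≤ a * ‖x - y‖^2 := by
        nlinarith [sq_nonneg (‖x - y‖ - 1),
          mul_le_mul_of_nonneg_right hahalf (sq_nonneg ‖x - y‖)]
      rw [hval]
      linarith
    obtain ⟨xb, yb, hxbn, hmax⟩ := exists_max_pair hcont hper hB
    set p : Em n := (2*a) • (xb - yb) with hp
    -- classical solution facts at xb
    have hlmaxU : IsLocalMax (fun x => UU x - a * ‖x - yb‖^2) xb := by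
      apply Filter.Eventually.of_forall
      intro xx
      have h := hmax xx yb
      rw [hval, hval] at h
      simp only
      linarith
    obtain ⟨hgU, hsU⟩ := constrained_max_gradient hcl.1 hlmaxU
    have hlap : lap UU xb ≤ n * (2*a) := lap_le_of_iFD2 hsU
    have heqn := hcl.2.2 xb
    rw [hgU, ← hp] at heqn
    have hεlap : ep * lap UU xb ≤ n * σ := by
      calc ep * lap UU xb ≤ ep * (n * (2*a)) :=
            mul_le_mul_of_nonneg_left hlap he0.le
        _ = n * (ep * (2*a)) := by ring
        _ = n * σ := by rw [hepa]
    have hHxb : H (xb, p) ≤ n + M := by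
      have h1 : lam * UU xb + H (xb, p) ≤ n * σ := by rw [heqn]; exact hεlap
      have h2 := (abs_le.1 (hUb xb)).1
      have hnn : (n:ℝ) * σ ≤ n := by
        calc (n:ℝ) * σ ≤ n * 1 := mul_le_mul_of_nonneg_left hσ1 (by positivity)
          _ = n := mul_one _
      linarith
    have hpK : ‖p‖ ≤ K := hK xb p hHxb
    have hdist : ‖xb - yb‖ = σ * ‖p‖ := by
      rw [hp, norm_smul, Real.norm_eq_abs, abs_of_pos (by positivity : (0:ℝ) < 2*a)]
      rw [← mul_assoc, h2a]
      field_simp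
    have hdK : ‖xb - yb‖ ≤ σ * K := by
      rw [hdist]
      exact mul_le_mul_of_nonneg_left hpK hσ0.le
    -- viscosity supersolution at yb
    have hlminu : IsLocalMin (fun y => uu y - (fun z => (-a) * ‖z - xb‖^2) y) yb := by
      apply Filter.Eventually.of_forall
      intro yy
      have h := hmax xb yy
      rw [hval, hval] at h
      rw [norm_sub_rev xb yy, norm_sub_rev xb yb] at h
      simp only
      linarith
    have hgφ : gradient (fun z => (-a) * ‖z - xb‖^2) yb = p := by
      rw [(hasGradientAt_quad (-a) xb yb).gradient, hp]
      module
    have hvis := (hv.2.2 (fun z => (-a) * ‖z - xb‖^2) (contDiff_quad (-a) xb 1)).2 yb hlminu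
    rw [hgφ] at hvis
    -- Lipschitz comparison
    have hybn : ‖yb‖ ≤ (n:ℝ) + K := by
      have : ‖yb‖ ≤ ‖xb‖ + ‖yb - xb‖ := by
        calc ‖yb‖ = ‖xb + (yb - xb)‖ := by rw [add_sub_cancel]
          _ ≤ ‖xb‖ + ‖yb - xb‖ := norm_add_le _ _
      rw [norm_sub_rev] at this
      have hσK : σ * K ≤ K := by
        calc σ * K ≤ 1 * K := mul_le_mul_of_nonneg_right hσ1 hK0
          _ = K := one_mul _
      linarith [hdK]
    have hlip := hC xb yb p (by linarith) hybn (by linarith)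
    have hlip2 : H (yb, p) - H (xb, p) ≤ C * (σ * K) := by
      have h1 := (abs_le.1 hlip).2
      have h2 : C * ‖yb - xb‖ ≤ C * (σ * K) := by
        apply mul_le_mul_of_nonneg_left _ hC0
        rw [norm_sub_rev]
        exact hdK
      linarith
    -- combine
    intro z
    have hzz : UU z - uu z ≤ UU xb - uu yb := by
      have h1 := hmax z z
      rw [hval, hval] at h1
      rw [sub_self, norm_zero] at h1
      have h2 : (0:ℝ) ≤ a * ‖xb - yb‖^2 := by positivity
      nlinarith
    have hfin : lam * (UU xb - uu yb) ≤ (n + C*K) * σ := by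
      have h1 : lam * UU xb ≤ n * σ - H (xb, p) := by linarith [hεlap, heqn.le, heqn.ge]
      have h2 : - (lam * uu yb) ≤ H (yb, p) := by linarith
      calc lam * (UU xb - uu yb) = lam * UU xb + (-(lam * uu yb)) := by ring
        _ ≤ (n * σ - H (xb, p)) + H (yb, p) := add_le_add h1 h2
        _ ≤ n * σ + C * (σ * K) := by linarith
        _ = (n + C*K) * σ := by ring
    calc lam * (UU z - uu z) ≤ lam * (UU xb - uu yb) :=
          mul_le_mul_of_nonneg_left hzz hl0.le
      _ ≤ (n + C*K) * σ := hfin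
  -- Direction B : sup (uu - UU) estimate
  have dirB : ∀ z : Em n, lam * (uu z - UU z) ≤ (n + C*K) * σ := by
    set Ψ : Em n × Em n → ℝ := fun q => uu q.1 - UU q.2 - a * ‖q.1 - q.2‖^2 with hΨ
    have hcont : Continuous Ψ := by
      apply Continuous.sub
      · exact (hv.1.comp continuous_fst).sub (hcl.1.continuous.comp continuous_snd)
      · exact continuous_const.mul (((continuous_fst.sub continuous_snd).norm).pow 2)
    have hper : ∀ (x y : Em n) (k : Fin n → ℤ), Ψ (x + intVec k, y + intVec k) = Ψ (x, y) := by
      intro x y k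
      have h1 : uu (x + intVec k) = uu x := hv.2.1 x k
      have h2 : UU (y + intVec k) = UU y := hcl.2.1 y k
      have h3 : (x + intVec k) - (y + intVec k) = x - y := by abel
      simp only [hΨ, h1, h2, h3]
    have hval : ∀ x y : Em n, Ψ (x, y) = uu x - UU y - a * ‖x - y‖^2 := fun _ _ => rfl
    have hB : ∀ x y : Em n, Ψ (x, y) ≤ (M/lam + M/lam + 1) - ‖x - y‖ := by
      intro x y
      have h1 := (abs_le.1 (huabs x)).2
      have h2 := (abs_le.1 (hUabs y)).1
      have hd0 : (0:ℝ) ≤ ‖x - y‖ := norm_nonneg _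
      have hsq : ‖x - y‖ - 1 ≤ a * ‖x - y‖^2 := by
        nlinarith [sq_nonneg (‖x - y‖ - 1),
          mul_le_mul_of_nonneg_right hahalf (sq_nonneg ‖x - y‖)]
      rw [hval]
      linarith
    obtain ⟨xb, yb, hxbn, hmax⟩ := exists_max_pair hcont hper hB
    set p : Em n := (2*a) • (xb - yb) with hp
    -- viscosity subsolution at xb
    have hlmaxu : IsLocalMax (fun x => uu x - (fun z => a * ‖z - yb‖^2) x) xb := by
      apply Filter.Eventually.of_forall
      intro xx
      have h := hmax xx yb
      rw [hval, hval] at h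
      simp only
      linarith
    have hgφ : gradient (fun z => a * ‖z - yb‖^2) xb = p := by
      rw [(hasGradientAt_quad a yb xb).gradient, hp]
    have hvis := (hv.2.2 (fun z => a * ‖z - yb‖^2) (contDiff_quad a yb 1)).1 xb hlmaxu
    rw [hgφ] at hvis
    -- p bound from subsolution inequality
    have hHxb : H (xb, p) ≤ n + M := by
      have h2 := (abs_le.1 (hub xb)).1
      have hn0 : (0:ℝ) ≤ n := Nat.cast_nonneg n
      linarith
    have hpK : ‖p‖ ≤ K := hK xb p hHxb
    have hdist : ‖xb - yb‖ = σ * ‖p‖ := by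
      rw [hp, norm_smul, Real.norm_eq_abs, abs_of_pos (by positivity : (0:ℝ) < 2*a)]
      rw [← mul_assoc, h2a]
      field_simp
    have hdK : ‖xb - yb‖ ≤ σ * K := by
      rw [hdist]
      exact mul_le_mul_of_nonneg_left hpK hσ0.le
    -- classical solution facts at yb (a min in the second slot)
    have hlminU : IsLocalMin (fun y => UU y + a * ‖y - xb‖^2) yb := by
      apply Filter.Eventually.of_forall
      intro yy
      have h := hmax xb yy
      rw [hval, hval] at h
      rw [norm_sub_rev xb yy, norm_sub_rev xb yb] at h
      simp only
      linarith
    obtain ⟨hgU, hsU⟩ := constrained_min_gradient hcl.1 hlminU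
    have hgUp : gradient UU yb = p := by
      rw [hgU, hp]
    have hlap : -((n:ℝ) * (2*a)) ≤ lap UU yb := lap_ge_of_iFD2 hsU
    have heqn := hcl.2.2 yb
    rw [hgUp] at heqn
    have hεlap : -((n:ℝ) * σ) ≤ ep * lap UU yb := by
      calc -((n:ℝ) * σ) = ep * (-(n * (2*a))) := by
            rw [show ep * (-(n * (2*a))) = -(n * (ep * (2*a))) by ring, hepa]
        _ ≤ ep * lap UU yb := mul_le_mul_of_nonneg_left hlap he0.le
    -- Lipschitz comparison
    have hybn : ‖yb‖ ≤ (n:ℝ) + K := by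
      have h : ‖yb‖ ≤ ‖xb‖ + ‖yb - xb‖ := by
        calc ‖yb‖ = ‖xb + (yb - xb)‖ := by rw [add_sub_cancel]
          _ ≤ ‖xb‖ + ‖yb - xb‖ := norm_add_le _ _
      rw [norm_sub_rev] at h
      have hσK : σ * K ≤ K := by
        calc σ * K ≤ 1 * K := mul_le_mul_of_nonneg_right hσ1 hK0
          _ = K := one_mul _
      linarith [hdK]
    have hlip := hC xb yb p (by linarith) hybn (by linarith)
    have hlip2 : H (yb, p) - H (xb, p) ≤ C * (σ * K) := by
      have h1 := (abs_le.1 hlip).2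
      have h2 : C * ‖yb - xb‖ ≤ C * (σ * K) := by
        apply mul_le_mul_of_nonneg_left _ hC0
        rw [norm_sub_rev]
        exact hdK
      linarith
    -- combine
    intro z
    have hzz : uu z - UU z ≤ uu xb - UU yb := by
      have h1 := hmax z z
      rw [hval, hval] at h1
      rw [sub_self, norm_zero] at h1
      have h2 : (0:ℝ) ≤ a * ‖xb - yb‖^2 := by positivity
      nlinarith
    have hfin : lam * (uu xb - UU yb) ≤ (n + C*K) * σ := by
      have h1 : lam * uu xb ≤ - H (xb, p) := by linarith
      have h2 : - (lam * UU yb) ≤ n * σ + H (yb, p) := by linarith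
      calc lam * (uu xb - UU yb) = lam * uu xb + (-(lam * UU yb)) := by ring
        _ ≤ (- H (xb, p)) + (n * σ + H (yb, p)) := add_le_add h1 h2
        _ ≤ n * σ + C * (σ * K) := by linarith
        _ = (n + C*K) * σ := by ring
    calc lam * (uu z - UU z) ≤ lam * (uu xb - UU yb) :=
          mul_le_mul_of_nonneg_left hzz hl0.le
      _ ≤ (n + C*K) * σ := hfin
  -- conclusion
  intro z
  have hA := dirA z
  have hB := dirB z
  have h1 : UU z - uu z ≤ (n + C*K) * σ / lam := by
    rw [le_div_iff₀ hl0, mul_comm]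
    exact hA
  have h2 : uu z - UU z ≤ (n + C*K) * σ / lam := by
    rw [le_div_iff₀ hl0, mul_comm]
    exact hB
  rw [abs_le]
  exact ⟨by linarith, h1⟩
end Helpers3

theorem viscous_discount_convergence_rough
    (n : ℕ) (hn : 1 ≤ n) (H : Em n × Em n → ℝ) (hH : Tonelli H)
    (u : ℝ → Em n → ℝ) (hu : ∀ lam ∈ Set.Ioc (0:ℝ) 1, ViscositySol H lam (u lam))
    (eps : ℝ → ℝ) (heps : ∀ lam ∈ Set.Ioc (0:ℝ) 1, eps lam ∈ Set.Ioc (0:ℝ) 1)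
    (U : ℝ → Em n → ℝ) (hU : ∀ lam ∈ Set.Ioc (0:ℝ) 1, ClassicalSol H lam (eps lam) (U lam))
    (u₀ : Em n → ℝ) (hu₀c : Continuous u₀) (hu₀p : ZPeriodic u₀)
    (hconv : TendstoUniformly u u₀ (nhdsWithin 0 (Set.Ioi 0)))
    (hmod : Filter.Tendsto (fun lam => eps lam / lam^2) (nhdsWithin 0 (Set.Ioi 0)) (nhds 0)) :
    TendstoUniformly U u₀ (nhdsWithin 0 (Set.Ioi 0)) := by
  classical
  -- uniform bound for H (·, 0)
  obtain ⟨M0, hM0, hM⟩ : ∃ M, 0 ≤ M ∧ ∀ x : Em n, |H (x, 0)| ≤ M := by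
    have hcont : Continuous (fun x : Em n => |H (x, 0)|) :=
      (hH.smooth.continuous.comp (continuous_id.prodMk continuous_const)).abs
    have hper : ZPeriodic (fun x : Em n => |H (x, 0)|) := fun x k => by
      simp [ZPeriodic, hH.periodic x 0 k]
    obtain ⟨xM, _, hmax⟩ := periodic_exists_max hcont hper
    exact ⟨|H (xM, 0)|, abs_nonneg _, fun x => hmax x⟩
  obtain ⟨R, hR⟩ := hH.superlinear 1
  set K := max R ((n:ℝ) + M0) with hKdef
  have hK0 : 0 ≤ K := le_trans (by positivity) (le_max_right _ _)
  have hK : ∀ x p : Em n, H (x, p) ≤ n + M0 → ‖p‖ ≤ K := by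
    intro x p hHp
    rcases le_or_gt R ‖p‖ with h | h
    · have h1 := hR x p h
      rw [one_mul] at h1
      exact le_trans (le_trans h1 hHp) (le_max_right _ _)
    · exact le_trans h.le (le_max_left _ _)
  obtain ⟨C, hC0, hC⟩ := H_lip hH.smooth ((n:ℝ) + K)
  set C2 := (n:ℝ) + C * K with hC2def
  have hC20 : 0 ≤ C2 := by positivity
  -- assemble the limit
  rw [Metric.tendstoUniformly_iff] at hconv ⊢
  intro δ hδ
  have h1 := hconv (δ/2) (by linarith)
  have h2 : Set.Ioc (0:ℝ) 1 ∈ nhdsWithin 0 (Set.Ioi 0) :=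
    Ioc_mem_nhdsGT_of_mem ⟨le_rfl, one_pos⟩
  have h3 : Filter.Tendsto (fun lam => C2 * Real.sqrt (eps lam / lam^2))
      (nhdsWithin 0 (Set.Ioi 0)) (nhds 0) := by
    have hs := (Real.continuous_sqrt.continuousAt (x := (0:ℝ))).tendsto.comp hmod
    rw [Real.sqrt_zero] at hs
    have := hs.const_mul C2
    simpa using this
  have h4 : ∀ᶠ lam in nhdsWithin 0 (Set.Ioi 0),
      C2 * Real.sqrt (eps lam / lam^2) < δ/2 :=
    h3.eventually_lt_const (by linarith)
  filter_upwards [h1, h2, h4] with lam hd hmem hlt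
  intro x
  have hkey := key_estimate hmem (heps lam hmem) (hu lam hmem) (hU lam hmem) hM0 hM hK0 hK
    hC0 hC x
  have hsqrt : Real.sqrt (eps lam) / lam = Real.sqrt (eps lam / lam^2) := by
    rw [Real.sqrt_div (heps lam hmem).1.le, Real.sqrt_sq hmem.1.le]
  have hkey2 : |U lam x - u lam x| < δ/2 := by
    calc |U lam x - u lam x| ≤ C2 * Real.sqrt (eps lam) / lam := hkey
      _ = C2 * (Real.sqrt (eps lam) / lam) := by ring
      _ = C2 * Real.sqrt (eps lam / lam^2) := by rw [hsqrt]
      _ < δ/2 := hlt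
  have htri : dist (u₀ x) (U lam x) ≤ dist (u₀ x) (u lam x) + dist (u lam x) (U lam x) :=
    dist_triangle _ _ _
  have hswap : dist (u lam x) (U lam x) = |U lam x - u lam x| := by
    rw [Real.dist_eq, abs_sub_comm]
  have hdx := hd x
  calc dist (u₀ x) (U lam x) ≤ dist (u₀ x) (u lam x) + dist (u lam x) (U lam x) := htri
    _ < δ/2 + δ/2 := by rw [hswap]; exact add_lt_add hdx hkey2
    _ = δ := by ring

end
end
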